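/- arXiv:1901.10734 — 3 statements merged into one kernel-verified Lean document; each statement's English description precedes it below -/
import Mathlib

section
/- Let q ≡ 1 (mod 4) be prime and e ≥ 3 odd. The eigenvalues of the adjacency matrix of G_{q^e} are exactly (q^e − q^{e−1})/2, (−q^{e−1} + q^{e−1/2})/2, 0, and (−q^{e−1} − q^{e−1/2})/2. -/
/-- The character χ_{q^e} : ℤ/q^eℤ → ℤ given by the Legendre symbol mod q of (the lift of) x. -/
def chi (q e : ℕ) [Fact q.Prime] (x : ZMod (q ^ e)) : ℤ := legendreSym q (x.val : ℤ)

/-- The graph G_{q^e}: vertex set ℤ/q^eℤ, with x ~ y iff χ_{q^e}(x−y)=1 (stated symmetrically;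
under the standing hypothesis q ≡ 1 (mod 4) the two conditions are equivalent). -/
def Gqe (q e : ℕ) [Fact q.Prime] : SimpleGraph (ZMod (q ^ e)) where
  Adj x y := x ≠ y ∧ chi q e (x - y) = 1 ∧ chi q e (y - x) = 1
  symm := ⟨fun _ _ ⟨h1, h2, h3⟩ => ⟨h1.symm, h3, h2⟩⟩
  loopless := ⟨fun _ h => h.1 rfl⟩

open Classical in
/-- The adjacency matrix of G_{q^e} with real entries. -/
noncomputable def adjMat (q e : ℕ) [Fact q.Prime] :
    Matrix (ZMod (q ^ e)) (ZMod (q ^ e)) ℝ :=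
  fun x y => if (Gqe q e).Adj x y then 1 else 0

open Finset


noncomputable def Frq (q : ℕ) [Fact q.Prime] (b : ZMod q) : ℝ :=
  if quadraticChar (ZMod q) b = 1 then 1 else 0

section charlemmas
variable {q : ℕ} [Fact q.Prime]

lemma q_ge_5 (h4 : q % 4 = 1) : 5 ≤ q := by
  have := (Fact.out : q.Prime).two_le
  rcases Nat.lt_or_ge q 5 with h | h
  · interval_cases q <;> omega
  · exact h

lemma chiq_neg_one (h4 : q % 4 = 1) : quadraticChar (ZMod q) (-1) = 1 := by
  have h5 := q_ge_5 h4
  haveI : Fact (1 < q) := ⟨by omega⟩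
  refine (quadraticChar_one_iff_isSquare (neg_ne_zero.mpr one_ne_zero)).mpr ?_
  exact (ZMod.exists_sq_eq_neg_one_iff).mpr (by omega)

lemma Frq_eq (b : ZMod q) :
    Frq q b = (1 + (quadraticChar (ZMod q) b : ℝ)) / 2 - (if b = 0 then (1:ℝ)/2 else 0) := by
  rcases eq_or_ne b 0 with hb | hb
  · simp [Frq, hb]
  · rcases quadraticChar_dichotomy hb with h | h <;> simp [Frq, h, hb]

lemma Frq_zero : Frq q 0 = 0 := by simp [Frq]

lemma Frq_neg_one (h4 : q % 4 = 1) : Frq q (-1) = 1 := by simp [Frq, chiq_neg_one h4]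

lemma ringChar_ne_two (h4 : q % 4 = 1) : ringChar (ZMod q) ≠ 2 := by
  rw [ZMod.ringChar_zmod_n]
  have := q_ge_5 h4; omega

lemma sum_chiq (h4 : q % 4 = 1) : ∑ b : ZMod q, (quadraticChar (ZMod q) b : ℝ) = 0 := by
  have h := quadraticChar_sum_zero (ringChar_ne_two h4)
  calc ∑ b : ZMod q, ((quadraticChar (ZMod q) b : ℤ) : ℝ)
      = ((∑ b : ZMod q, quadraticChar (ZMod q) b : ℤ) : ℝ) := by push_cast; ring
    _ = 0 := by rw [h]; simp

lemma sum_Frq (h4 : q % 4 = 1) : ∑ b : ZMod q, Frq q b = ((q : ℝ) - 1) / 2 := by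
  simp only [Frq_eq]
  rw [Finset.sum_sub_distrib]
  have h1 : ∑ b : ZMod q, (1 + ((quadraticChar (ZMod q) b : ℤ) : ℝ))/2 = (q:ℝ)/2 := by
    rw [← Finset.sum_div, Finset.sum_add_distrib, sum_chiq h4, Finset.sum_const,
      Finset.card_univ, ZMod.card]
    simp
  have h2 : ∑ b : ZMod q, (if b = 0 then (1:ℝ)/2 else 0) = 1/2 := by simp
  rw [h1, h2]; ring

lemma sum_chiq_mul (h4 : q % 4 = 1) {a : ZMod q} (ha : a ≠ 0) :
    ∑ b : ZMod q, quadraticChar (ZMod q) b * quadraticChar (ZMod q) (b - a) = -1 := by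
  set χ := quadraticChar (ZMod q) with hχ
  have key : ∀ b : ZMod q, b ≠ 0 → χ b * χ (b - a) = χ (1 - a * b⁻¹) := by
    intro b hb
    have hfac : b - a = b * (1 - a * b⁻¹) := by field_simp
    rw [hfac, map_mul, ← mul_assoc, ← pow_two, quadraticChar_sq_one hb, one_mul]
  have h0 : χ (0 : ZMod q) * χ ((0 : ZMod q) - a) = 0 := by
    have : χ (0 : ZMod q) = 0 := by simp [hχ]
    rw [this, zero_mul]
  rw [← Finset.sum_erase (f := fun b : ZMod q => χ b * χ (b - a)) Finset.univ h0]
  rw [Finset.sum_congr rfl (fun b hb => key b ((Finset.mem_erase.mp hb).1))]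
  have hbij : ∑ b ∈ Finset.univ.erase (0 : ZMod q), χ (1 - a * b⁻¹)
      = ∑ c ∈ Finset.univ.erase (1 : ZMod q), χ c := by
    refine Finset.sum_nbij' (fun b => 1 - a * b⁻¹) (fun c => a * (1 - c)⁻¹) ?_ ?_ ?_ ?_ ?_
    · intro b hb
      have hb0 : b ≠ 0 := (Finset.mem_erase.mp hb).1
      have hne : a * b⁻¹ ≠ 0 := mul_ne_zero ha (inv_ne_zero hb0)
      simp only [Finset.mem_erase, Finset.mem_univ, and_true]
      intro h
      exact hne (by linear_combination -h)
    · intro c hc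
      have hc1 : c ≠ 1 := (Finset.mem_erase.mp hc).1
      have h1c : (1 : ZMod q) - c ≠ 0 := sub_ne_zero.mpr (Ne.symm hc1)
      simp only [Finset.mem_erase, Finset.mem_univ, and_true]
      exact mul_ne_zero ha (inv_ne_zero h1c)
    · intro b hb
      have hb0 : b ≠ 0 := (Finset.mem_erase.mp hb).1
      field_simp
      rw [sub_sub_cancel, div_self ha]
    · intro c hc
      have hc1 : c ≠ 1 := (Finset.mem_erase.mp hc).1
      have h1c : (1 : ZMod q) - c ≠ 0 := sub_ne_zero.mpr (Ne.symm hc1)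
      field_simp
      ring
    · intro b hb
      rfl
  rw [hbij, Finset.sum_erase_eq_sub (Finset.mem_univ (1 : ZMod q))]
  have : ∑ c : ZMod q, χ c = 0 := quadraticChar_sum_zero (ringChar_ne_two h4)
  rw [this, map_one]; ring

end charlemmas

section charlemmas
variable {q : ℕ} [Fact q.Prime]

lemma sum_chiq_mul_real (h4 : q % 4 = 1) (a : ZMod q) :
    ∑ b : ZMod q, ((quadraticChar (ZMod q) b : ℤ) : ℝ) * ((quadraticChar (ZMod q) (a - b) : ℤ) : ℝ)
      = if a = 0 then (q : ℝ) - 1 else -1 := by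
  have hneg : ∀ w : ZMod q, quadraticChar (ZMod q) (-w) = quadraticChar (ZMod q) w := by
    intro w
    rw [← neg_one_mul, map_mul, chiq_neg_one h4, one_mul]
  rcases eq_or_ne a 0 with ha | ha
  · subst ha
    rw [if_pos rfl]
    have : ∀ b : ZMod q, ((quadraticChar (ZMod q) b : ℤ) : ℝ) *
        ((quadraticChar (ZMod q) ((0 : ZMod q) - b) : ℤ) : ℝ)
        = 1 - (if b = 0 then (1:ℝ) else 0) := by
      intro b
      rw [zero_sub, hneg b]
      rcases eq_or_ne b 0 with hb | hb
      · simp [hb]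
      · rcases quadraticChar_dichotomy hb with h | h <;> simp [h, hb]
    rw [Finset.sum_congr rfl (fun b _ => this b), Finset.sum_sub_distrib]
    simp [Finset.card_univ, ZMod.card]
  · rw [if_neg ha]
    have hz : ∑ b : ZMod q, quadraticChar (ZMod q) b * quadraticChar (ZMod q) (b - a) = -1 :=
      sum_chiq_mul h4 ha
    have : ∀ b : ZMod q, quadraticChar (ZMod q) (a - b) = quadraticChar (ZMod q) (b - a) := by
      intro b
      rw [show a - b = -(b - a) by ring, hneg]
    calc ∑ b : ZMod q, ((quadraticChar (ZMod q) b : ℤ) : ℝ) * ((quadraticChar (ZMod q) (a - b) : ℤ) : ℝ)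
        = ((∑ b : ZMod q, quadraticChar (ZMod q) b * quadraticChar (ZMod q) (b - a) : ℤ) : ℝ) := by
          push_cast
          exact Finset.sum_congr rfl (fun b _ => by rw [this b])
      _ = -1 := by rw [hz]; simp

lemma conv_Frq (h4 : q % 4 = 1) (a : ZMod q) :
    ∑ b : ZMod q, Frq q b * Frq q (a - b)
      = ((q : ℝ) - 1)/4 * ((if a = 0 then (1:ℝ) else 0) + 1) - Frq q a := by
  set X : ZMod q → ℝ := fun b => ((quadraticChar (ZMod q) b : ℤ) : ℝ) with hX
  have expand : ∀ b : ZMod q, Frq q b * Frq q (a - b) =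
      (1 + X b + X (a - b) + X b * X (a - b))/4
      - (if b = 0 then (1 + X (a - b))/4 else 0)
      - (if a - b = 0 then (1 + X b)/4 else 0)
      + (if b = 0 then (if a - b = 0 then (1:ℝ)/4 else 0) else 0) := by
    intro b
    rw [Frq_eq, Frq_eq]
    simp only [hX]
    split_ifs <;> ring
  rw [Finset.sum_congr rfl (fun b _ => expand b), Finset.sum_add_distrib,
    Finset.sum_sub_distrib, Finset.sum_sub_distrib]
  have S1 : ∑ b : ZMod q, (1 + X b + X (a - b) + X b * X (a - b))/4
      = ((q : ℝ) + (if a = 0 then (q : ℝ) - 1 else -1))/4 := by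
    rw [← Finset.sum_div]
    congr 1
    rw [Finset.sum_add_distrib, Finset.sum_add_distrib, Finset.sum_add_distrib]
    have e1 : ∑ _b : ZMod q, (1 : ℝ) = (q : ℝ) := by
      simp [Finset.card_univ, ZMod.card]
    have e2 : ∑ b : ZMod q, X (a - b) = 0 := by
      have h := Equiv.sum_comp (Equiv.subLeft a) X
      simp only [Equiv.subLeft_apply] at h
      rw [h]
      exact sum_chiq h4
    have e3 : ∑ b : ZMod q, X b = 0 := sum_chiq h4
    rw [e1, e2, e3, sum_chiq_mul_real h4 a]
    ring
  have S2 : ∑ b : ZMod q, (if b = 0 then (1 + X (a - b))/4 else 0) = (1 + X a)/4 := by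
    rw [Finset.sum_ite_eq' Finset.univ (0 : ZMod q) (fun b => (1 + X (a - b))/4)]
    simp
  have S3 : ∑ b : ZMod q, (if a - b = 0 then (1 + X b)/4 else 0) = (1 + X a)/4 := by
    simp only [sub_eq_zero]
    rw [Finset.sum_ite_eq Finset.univ a (fun b => (1 + X b)/4)]
    simp
  have S4 : ∑ b : ZMod q, (if b = 0 then (if a - b = 0 then (1:ℝ)/4 else 0) else 0)
      = if a = 0 then (1:ℝ)/4 else 0 := by
    rw [Finset.sum_ite_eq' Finset.univ (0 : ZMod q) (fun b => if a - b = 0 then (1:ℝ)/4 else 0)]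
    simp
  rw [S1, S2, S3, S4, Frq_eq a]
  have hX0 : X (0 : ZMod q) = 0 := by simp [hX]
  rcases eq_or_ne a 0 with ha | ha
  · subst ha
    rw [if_pos rfl, if_pos rfl, if_pos rfl]
    have h0 : ((quadraticChar (ZMod q) (0 : ZMod q) : ℤ) : ℝ) = 0 := by simp
    norm_num [show X (0 : ZMod q) = ((quadraticChar (ZMod q) (0 : ZMod q) : ℤ) : ℝ) from rfl, h0]
    ring
  · rw [if_neg ha, if_neg ha, if_neg ha, if_neg ha]
    ring

end charlemmas

section fiber
variable (q e : ℕ) [Fact q.Prime]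

def pim (he : e ≠ 0) : ZMod (q ^ e) →+* ZMod q :=
  ZMod.castHom (dvd_pow_self q he) (ZMod q)

variable {q e}

lemma pim_natCast (he : e ≠ 0) (m : ℕ) : pim q e he (m : ZMod (q ^ e)) = (m : ZMod q) :=
  map_natCast _ m

lemma chi_eq (he : e ≠ 0) (z : ZMod (q ^ e)) :
    chi q e z = quadraticChar (ZMod q) (pim q e he z) := by
  haveI : NeZero (q ^ e) := ⟨pow_ne_zero e (Fact.out : q.Prime).ne_zero⟩
  show quadraticChar (ZMod q) ((z.val : ℤ) : ZMod q) = _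
  rw [Int.cast_natCast]
  congr 1
  rw [ZMod.natCast_val]
  rfl

lemma card_fiber (he : e ≠ 0) (b : ZMod q) :
    (Finset.univ.filter fun y : ZMod (q ^ e) => pim q e he y = b).card = q ^ (e - 1) := by
  haveI : NeZero (q ^ e) := ⟨pow_ne_zero e (Fact.out : q.Prime).ne_zero⟩
  have hq0 : 0 < q := (Fact.out : q.Prime).pos
  have hcard : ∀ b : ZMod q,
      (Finset.univ.filter fun y : ZMod (q ^ e) => pim q e he y = b).card
      = (Finset.univ.filter fun y : ZMod (q ^ e) => pim q e he y = 0).card := by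
    intro b
    apply Finset.card_nbij' (fun y => y - ((b.val : ℕ) : ZMod (q ^ e)))
      (fun y => y + ((b.val : ℕ) : ZMod (q ^ e)))
    · intro y hy
      simp only [Finset.mem_coe, Finset.mem_filter, Finset.mem_univ, true_and] at hy ⊢
      rw [map_sub, hy, pim_natCast, ZMod.natCast_val, ZMod.cast_id]
      ring
    · intro y hy
      simp only [Finset.mem_coe, Finset.mem_filter, Finset.mem_univ, true_and] at hy ⊢
      rw [map_add, hy, pim_natCast, ZMod.natCast_val, ZMod.cast_id]
      ring
    · intro y _; ring
    · intro y _; ring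
  have hsum : ∑ b : ZMod q,
      (Finset.univ.filter fun y : ZMod (q ^ e) => pim q e he y = b).card
      = q ^ e := by
    have h := Finset.card_eq_sum_card_fiberwise
      (s := (Finset.univ : Finset (ZMod (q ^ e)))) (t := Finset.univ)
      (f := pim q e he) (fun _ _ => Finset.mem_univ _)
    rw [Finset.card_univ, ZMod.card] at h
    exact h.symm
  rw [Finset.sum_congr rfl (fun b _ => hcard b), Finset.sum_const, Finset.card_univ,
    ZMod.card, smul_eq_mul] at hsum
  have hpow : q ^ e = q * q ^ (e - 1) := by
    conv_lhs => rw [show e = 1 + (e - 1) by omega]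
    rw [pow_add, pow_one]
  rw [hcard b]
  exact Nat.eq_of_mul_eq_mul_left hq0 (hsum.trans hpow)
end fiber

section fiber2
variable {q e : ℕ} [Fact q.Prime]

lemma fiber_sum (he : e ≠ 0) (g : ZMod q → ℝ) :
    ∑ y : ZMod (q ^ e), g (pim q e he y) = (q : ℝ) ^ (e - 1) * ∑ b : ZMod q, g b := by
  haveI : NeZero (q ^ e) := ⟨pow_ne_zero e (Fact.out : q.Prime).ne_zero⟩
  rw [← Finset.sum_fiberwise' Finset.univ (fun y => pim q e he y) g]
  rw [Finset.mul_sum]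
  refine Finset.sum_congr rfl (fun b _ => ?_)
  rw [Finset.sum_const, card_fiber he b, nsmul_eq_mul]
  push_cast
  ring

lemma adj_eq (h4 : q % 4 = 1) (he : e ≠ 0) (x y : ZMod (q ^ e)) :
    adjMat q e x y = Frq q (pim q e he x - pim q e he y) := by
  have hpi : pim q e he x - pim q e he y = pim q e he (x - y) := (map_sub _ x y).symm
  rw [hpi]
  unfold adjMat Frq
  by_cases h : quadraticChar (ZMod q) (pim q e he (x - y)) = 1
  · rw [if_pos h, if_pos]
    show x ≠ y ∧ chi q e (x - y) = 1 ∧ chi q e (y - x) = 1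
    refine ⟨?_, ?_, ?_⟩
    · intro hxy
      rw [hxy, sub_self, map_zero] at h
      simp at h
    · rw [chi_eq he]; exact h
    · rw [chi_eq he, show y - x = -(x - y) by ring, map_neg, ← neg_one_mul, map_mul,
        chiq_neg_one h4, one_mul]
      exact h
  · rw [if_neg h, if_neg]
    intro hadj
    exact h (by rw [← chi_eq he]; exact (show x ≠ y ∧ chi q e (x - y) = 1 ∧ chi q e (y - x) = 1 from hadj).2.1)
end fiber2

noncomputable def Bmat (q e : ℕ) [Fact q.Prime] (he : e ≠ 0) :
    Matrix (ZMod (q ^ e)) (ZMod (q ^ e)) ℝ :=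
  fun x y => if pim q e he x = pim q e he y then 1 else 0

noncomputable def Jmat (q e : ℕ) [Fact q.Prime] :
    Matrix (ZMod (q ^ e)) (ZMod (q ^ e)) ℝ := fun _ _ => 1

section mat
variable {q e : ℕ} [Fact q.Prime]

lemma matI1 (h4 : q % 4 = 1) (he : e ≠ 0) :
    adjMat q e * adjMat q e
      = ((q : ℝ) ^ (e - 1) * (((q : ℝ) - 1)/4)) • Bmat q e he
        + (((q : ℝ) ^ (e - 1) * (((q : ℝ) - 1)/4)) • Jmat q e
           - ((q : ℝ) ^ (e - 1)) • adjMat q e) := by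
  ext x y
  rw [Matrix.mul_apply]
  have h1 : ∀ z, adjMat q e x z * adjMat q e z y
      = (fun b => Frq q (pim q e he x - b) * Frq q (b - pim q e he y)) (pim q e he z) := by
    intro z
    rw [adj_eq h4 he, adj_eq h4 he]
  rw [Finset.sum_congr rfl fun z _ => h1 z, fiber_sum (q := q) (e := e) he
    (fun b => Frq q (pim q e he x - b) * Frq q (b - pim q e he y))]
  have h2 : ∑ b : ZMod q, Frq q (pim q e he x - b) * Frq q (b - pim q e he y)
      = ∑ b : ZMod q, Frq q b * Frq q ((pim q e he x - pim q e he y) - b) := by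
    rw [← Equiv.sum_comp (Equiv.subLeft (pim q e he x))
      (fun b => Frq q b * Frq q ((pim q e he x - pim q e he y) - b))]
    refine Finset.sum_congr rfl fun b _ => ?_
    simp only [Equiv.subLeft_apply]
    congr 2 <;> ring
  rw [h2, conv_Frq h4]
  simp only [Matrix.add_apply, Matrix.sub_apply, Matrix.smul_apply, smul_eq_mul,
    Bmat, Jmat]
  rw [adj_eq h4 he x y]
  by_cases hxy : pim q e he x = pim q e he y
  · rw [if_pos (sub_eq_zero.mpr hxy), if_pos hxy]
    ring
  · rw [if_neg (fun hc => hxy (sub_eq_zero.mp hc)), if_neg hxy]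
    ring

lemma matI2 (h4 : q % 4 = 1) (he : e ≠ 0) :
    adjMat q e * Bmat q e he = ((q : ℝ) ^ (e - 1)) • adjMat q e := by
  ext x y
  rw [Matrix.mul_apply]
  have h1 : ∀ z, adjMat q e x z * Bmat q e he z y
      = (fun b => Frq q (pim q e he x - b) * (if b = pim q e he y then (1:ℝ) else 0))
          (pim q e he z) := by
    intro z
    rw [adj_eq h4 he]
    rfl
  rw [Finset.sum_congr rfl fun z _ => h1 z, fiber_sum (q := q) (e := e) he
    (fun b => Frq q (pim q e he x - b) * (if b = pim q e he y then (1:ℝ) else 0))]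
  simp only [mul_ite, mul_one, mul_zero]
  rw [Finset.sum_ite_eq' Finset.univ (pim q e he y) (fun b => Frq q (pim q e he x - b))]
  simp only [Finset.mem_univ, if_true, Matrix.smul_apply, smul_eq_mul]
  rw [adj_eq h4 he x y]

lemma matI3 (h4 : q % 4 = 1) (he : e ≠ 0) :
    adjMat q e * Jmat q e
      = ((q : ℝ) ^ (e - 1) * (((q : ℝ) - 1)/2)) • Jmat q e := by
  ext x y
  rw [Matrix.mul_apply]
  have h1 : ∀ z, adjMat q e x z * Jmat q e z y
      = (fun b => Frq q (pim q e he x - b)) (pim q e he z) := by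
    intro z
    rw [adj_eq h4 he]
    show Frq q _ * 1 = _
    rw [mul_one]
  rw [Finset.sum_congr rfl fun z _ => h1 z, fiber_sum (q := q) (e := e) he
    (fun b => Frq q (pim q e he x - b))]
  have h2 : ∑ b : ZMod q, Frq q (pim q e he x - b) = ∑ b : ZMod q, Frq q b := by
    rw [← Equiv.sum_comp (Equiv.subLeft (pim q e he x)) (fun b => Frq q b)]
    exact Finset.sum_congr rfl fun b _ => rfl
  rw [h2, sum_Frq h4]
  simp [Jmat]

lemma eig_const (h4 : q % 4 = 1) (he : e ≠ 0) :
    (adjMat q e).mulVec (fun _ => (1:ℝ))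
      = ((q : ℝ) ^ (e - 1) * (((q : ℝ) - 1)/2)) • (fun _ => (1:ℝ)) := by
  funext x
  show ∑ y, adjMat q e x y * 1 = _
  have h1 : ∀ y, adjMat q e x y * 1 = (fun b => Frq q (pim q e he x - b)) (pim q e he y) := by
    intro y
    rw [mul_one, adj_eq h4 he]
  rw [Finset.sum_congr rfl fun y _ => h1 y, fiber_sum (q := q) (e := e) he
    (fun b => Frq q (pim q e he x - b))]
  have h2 : ∑ b : ZMod q, Frq q (pim q e he x - b) = ∑ b : ZMod q, Frq q b := by
    rw [← Equiv.sum_comp (Equiv.subLeft (pim q e he x)) (fun b => Frq q b)]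
    exact Finset.sum_congr rfl fun b _ => rfl
  rw [h2, sum_Frq h4]
  simp

lemma eig_zero (h4 : q % 4 = 1) (he : e ≠ 0) :
    (adjMat q e).mulVec
      (fun y => (if y = 0 then (1:ℝ) else 0) - (if y = (q : ZMod (q ^ e)) then 1 else 0))
      = 0 := by
  funext x
  show ∑ y, adjMat q e x y * _ = _
  have h1 : ∀ y : ZMod (q ^ e), adjMat q e x y *
        ((if y = 0 then (1:ℝ) else 0) - (if y = (q : ZMod (q ^ e)) then 1 else 0))
      = (if y = 0 then adjMat q e x y else 0) - (if y = (q : ZMod (q ^ e)) then adjMat q e x y else 0) := by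
    intro y
    split_ifs <;> ring
  rw [Finset.sum_congr rfl fun y _ => h1 y, Finset.sum_sub_distrib,
    Finset.sum_ite_eq' Finset.univ (0 : ZMod (q ^ e)) (fun y => adjMat q e x y),
    Finset.sum_ite_eq' Finset.univ ((q : ℕ) : ZMod (q ^ e)) (fun y => adjMat q e x y)]
  simp only [Finset.mem_univ, if_true]
  rw [adj_eq h4 he, adj_eq h4 he, map_zero, pim_natCast he, ZMod.natCast_self]
  simp

lemma paley_step (h4 : q % 4 = 1) (s : ℝ) (a : ZMod q) :
    ∑ b : ZMod q, Frq q (a - b) *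
        (Frq q b - Frq q (b - 1) - s * ((if b = 0 then (1:ℝ) else 0) - (if b = 1 then 1 else 0)))
      = (((q : ℝ) - 1)/4) * ((if a = 0 then (1:ℝ) else 0) - (if a = 1 then 1 else 0))
        - (1 + s) * (Frq q a - Frq q (a - 1)) := by
  have expand : ∀ b : ZMod q, Frq q (a - b) *
        (Frq q b - Frq q (b - 1) - s * ((if b = 0 then (1:ℝ) else 0) - (if b = 1 then 1 else 0)))
      = Frq q b * Frq q (a - b) - Frq q (a - b) * Frq q (b - 1)
        - s * ((if b = 0 then Frq q (a - b) else 0) - (if b = 1 then Frq q (a - b) else 0)) := by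
    intro b
    split_ifs <;> ring
  rw [Finset.sum_congr rfl fun b _ => expand b, Finset.sum_sub_distrib, Finset.sum_sub_distrib]
  have T2 : ∑ b : ZMod q, Frq q (a - b) * Frq q (b - 1)
      = ∑ b : ZMod q, Frq q b * Frq q ((a - 1) - b) := by
    rw [← Equiv.sum_comp (Equiv.addRight (1 : ZMod q))
      (fun b => Frq q (a - b) * Frq q (b - 1))]
    refine Finset.sum_congr rfl fun b _ => ?_
    simp only [Equiv.coe_addRight]
    rw [mul_comm]
    congr 2 <;> ring
  have T3 : ∑ b : ZMod q, (if b = 0 then Frq q (a - b) else 0) = Frq q a := by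
    rw [Finset.sum_ite_eq' Finset.univ (0 : ZMod q) (fun b => Frq q (a - b))]
    simp
  have T4 : ∑ b : ZMod q, (if b = 1 then Frq q (a - b) else 0) = Frq q (a - 1) := by
    rw [Finset.sum_ite_eq' Finset.univ (1 : ZMod q) (fun b => Frq q (a - b))]
    simp
  rw [← Finset.mul_sum, Finset.sum_sub_distrib, T3, T4, conv_Frq h4 a, T2, conv_Frq h4 (a - 1)]
  have hcond : ((a - 1 = 0) ↔ (a = 1)) := sub_eq_zero
  by_cases ha : a = 0
  · have ha1 : a ≠ 1 := by
      intro h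
      rw [ha] at h
      haveI : Fact (1 < q) := ⟨by have := q_ge_5 h4; omega⟩
      exact zero_ne_one h
    rw [if_pos ha, if_neg ha1, if_neg (fun hc => ha1 (hcond.mp hc))]
    ring
  · by_cases ha1 : a = 1
    · rw [if_neg ha, if_pos ha1, if_pos (hcond.mpr ha1)]
      ring
    · rw [if_neg ha, if_neg ha1, if_neg (fun hc => ha1 (hcond.mp hc))]
      ring

lemma eig_rs (h4 : q % 4 = 1) (he : e ≠ 0) (r s : ℝ) (hsum : r + s = -1)
    (hprod : r * s = (1 - (q : ℝ))/4) :
    (adjMat q e).mulVec (fun x =>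
        Frq q (pim q e he x) - Frq q (pim q e he x - 1)
          - s * ((if pim q e he x = 0 then (1:ℝ) else 0) - (if pim q e he x = 1 then 1 else 0)))
      = ((q : ℝ) ^ (e - 1) * r) • (fun x =>
        Frq q (pim q e he x) - Frq q (pim q e he x - 1)
          - s * ((if pim q e he x = 0 then (1:ℝ) else 0) - (if pim q e he x = 1 then 1 else 0))) := by
  set w : ZMod q → ℝ := fun a =>
    Frq q a - Frq q (a - 1) - s * ((if a = 0 then (1:ℝ) else 0) - (if a = 1 then 1 else 0)) with hw
  funext x
  show ∑ y, adjMat q e x y * w (pim q e he y) = _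
  have h1 : ∀ y, adjMat q e x y * w (pim q e he y)
      = (fun b => Frq q (pim q e he x - b) * w b) (pim q e he y) := by
    intro y
    rw [adj_eq h4 he]
  rw [Finset.sum_congr rfl fun y _ => h1 y, fiber_sum (q := q) (e := e) he
    (fun b => Frq q (pim q e he x - b) * w b)]
  have h2 := paley_step h4 s (pim q e he x)
  simp only [hw]
  rw [h2]
  show _ = (q : ℝ) ^ (e - 1) * r * w (pim q e he x)
  simp only [hw]
  set X := Frq q (pim q e he x) - Frq q (pim q e he x - 1) with hX
  set u := (if pim q e he x = 0 then (1:ℝ) else 0) - (if pim q e he x = 1 then 1 else 0) with hu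
  show (q : ℝ) ^ (e - 1) * (((q : ℝ) - 1)/4 * u - (1 + s) * X)
      = (q : ℝ) ^ (e - 1) * r * (X - s * u)
  linear_combination ((q : ℝ) ^ (e - 1) * u) * hprod - ((q : ℝ) ^ (e - 1) * X) * hsum

end mat

/-- For a prime q ≡ 1 (mod 4) and odd e ≥ 3, the eigenvalues of the adjacency
matrix of G_{q^e} are exactly (q^e−q^{e−1})/2, (−q^{e−1}+q^{e−1/2})/2, 0 and
(−q^{e−1}−q^{e−1/2})/2. -/
theorem stmt_13 (q e : ℕ) [Fact q.Prime] (h4 : q % 4 = 1) (he : Odd e) (he3 : 3 ≤ e)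
    (μ : ℝ) :
    (∃ v : ZMod (q ^ e) → ℝ, v ≠ 0 ∧ (adjMat q e).mulVec v = μ • v) ↔
      μ ∈ ({((q : ℝ) ^ e - (q : ℝ) ^ (e - 1)) / 2,
            (-(q : ℝ) ^ (e - 1) + (q : ℝ) ^ (e - 1) * Real.sqrt q) / 2, 0,
            (-(q : ℝ) ^ (e - 1) - (q : ℝ) ^ (e - 1) * Real.sqrt q) / 2} : Set ℝ) := by
  have hq5 : 5 ≤ q := q_ge_5 h4
  have he0 : e ≠ 0 := by omega
  have hqR : (1 : ℝ) < (q : ℝ) := by exact_mod_cast (by omega : 1 < q)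
  have ht0 : (0 : ℝ) < (q : ℝ) ^ (e - 1) := by positivity
  have hsq : Real.sqrt q * Real.sqrt q = (q : ℝ) := Real.mul_self_sqrt (by positivity)
  have hsq1 : 1 < Real.sqrt q := by nlinarith [Real.sqrt_nonneg (q : ℝ)]
  have hqe : (q : ℝ) ^ e = (q : ℝ) ^ (e - 1) * (q : ℝ) := by
    rw [← pow_succ]
    congr 1
    omega
  constructor
  · rintro ⟨v, hv0, hv⟩
    obtain ⟨x₀, hx₀⟩ := Function.ne_iff.mp hv0
    have I1 := matI1 (q := q) (e := e) h4 he0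
    have I2 := matI2 (q := q) (e := e) h4 he0
    have I3 := matI3 (q := q) (e := e) h4 he0
    have hAb : (adjMat q e).mulVec ((Bmat q e he0).mulVec v)
        = ((q : ℝ) ^ (e - 1)) • μ • v := by
      rw [Matrix.mulVec_mulVec, I2, Matrix.smul_mulVec, hv]
    have hAj : (adjMat q e).mulVec ((Jmat q e).mulVec v)
        = ((q : ℝ) ^ (e - 1) * (((q : ℝ) - 1)/2)) • (Jmat q e).mulVec v := by
      rw [Matrix.mulVec_mulVec, I3, Matrix.smul_mulVec]
    have E1 : μ • μ • v
        = ((q : ℝ) ^ (e - 1) * (((q : ℝ) - 1)/4)) • (Bmat q e he0).mulVec v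
          + (((q : ℝ) ^ (e - 1) * (((q : ℝ) - 1)/4)) • (Jmat q e).mulVec v
             - ((q : ℝ) ^ (e - 1)) • μ • v) := by
      have h := congrArg (fun M : Matrix (ZMod (q ^ e)) (ZMod (q ^ e)) ℝ => M.mulVec v) I1
      simp only [Matrix.add_mulVec, Matrix.sub_mulVec, Matrix.smul_mulVec] at h
      rw [← Matrix.mulVec_mulVec, hv, Matrix.mulVec_smul, hv] at h
      exact h
    have E2 := congrArg (fun u => (adjMat q e).mulVec u) E1
    simp only [Matrix.mulVec_add, Matrix.mulVec_sub, Matrix.mulVec_smul] at E2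
    rw [hv, hAb, hAj] at E2
    have E3 := congrArg (fun u => (adjMat q e).mulVec u) E2
    simp only [Matrix.mulVec_add, Matrix.mulVec_sub, Matrix.mulVec_smul] at E3
    rw [hv, hAj] at E3
    have eq2 := congrFun E2 x₀
    have eq3 := congrFun E3 x₀
    simp only [Pi.smul_apply, Pi.add_apply, Pi.sub_apply, smul_eq_mul] at eq2 eq3
    have key : μ * (μ - (q : ℝ) ^ (e - 1) * (((q : ℝ) - 1)/2))
        * ((μ - (q : ℝ) ^ (e - 1) * ((-1 + Real.sqrt q)/2))
           * (μ - (q : ℝ) ^ (e - 1) * ((-1 - Real.sqrt q)/2))) * v x₀ = 0 := by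
      linear_combination eq3 - ((q : ℝ) ^ (e - 1) * (((q : ℝ) - 1)/2)) * eq2
        + ((μ * (μ - (q : ℝ) ^ (e - 1) * (((q : ℝ) - 1)/2)) * ((q : ℝ) ^ (e - 1))^2 / 4
            + μ * (q : ℝ) * ((q : ℝ) ^ (e - 1))^3 / 4 - μ * ((q : ℝ) ^ (e - 1))^3 / 4
            - μ^2 * ((q : ℝ) ^ (e - 1))^2 / 2) * v x₀) * hsq
    have key2 : μ * (μ - (q : ℝ) ^ (e - 1) * (((q : ℝ) - 1)/2))
        * ((μ - (q : ℝ) ^ (e - 1) * ((-1 + Real.sqrt q)/2))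
           * (μ - (q : ℝ) ^ (e - 1) * ((-1 - Real.sqrt q)/2))) = 0 :=
      by
        rcases mul_eq_zero.mp key with h | h
        · exact h
        · exact absurd h hx₀
    simp only [Set.mem_insert_iff, Set.mem_singleton_iff]
    rcases mul_eq_zero.mp key2 with h | h
    · rcases mul_eq_zero.mp h with h' | h'
      · right; right; left; exact h'
      · left
        rw [sub_eq_zero.mp h', hqe]
        ring
    · rcases mul_eq_zero.mp h with h' | h'
      · right; left
        rw [sub_eq_zero.mp h']
        ring
      · right; right; right
        rw [sub_eq_zero.mp h']
        ring
  · intro hμ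
    simp only [Set.mem_insert_iff, Set.mem_singleton_iff] at hμ
    haveI : Fact (1 < q) := ⟨by omega⟩
    rcases hμ with hμ | hμ | hμ | hμ
    · refine ⟨fun _ => 1, fun h => by simpa using congrFun h 0, ?_⟩
      have hμ' : μ = (q : ℝ) ^ (e - 1) * (((q : ℝ) - 1)/2) := by
        rw [hμ, hqe]; ring
      rw [hμ']
      exact eig_const h4 he0
    · refine ⟨fun x => Frq q (pim q e he0 x) - Frq q (pim q e he0 x - 1)
          - ((-1 - Real.sqrt q)/2) * ((if pim q e he0 x = 0 then (1:ℝ) else 0)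
              - (if pim q e he0 x = 1 then 1 else 0)), ?_, ?_⟩
      · -- nonzero for r-case
        intro hzero
        have h0 := congrFun hzero 0
        rw [map_zero (pim q e he0)] at h0
        simp only [Pi.zero_apply, Frq_zero, zero_sub, Frq_neg_one h4, if_pos rfl,
          if_neg (zero_ne_one (α := ZMod q))] at h0
        norm_num at h0
        nlinarith [hsq1, h0]
      · have hμ' : μ = (q : ℝ) ^ (e - 1) * ((-1 + Real.sqrt q)/2) := by rw [hμ]; ring
        rw [hμ']
        exact eig_rs h4 he0 ((-1 + Real.sqrt q)/2) ((-1 - Real.sqrt q)/2)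
          (by ring) (by linear_combination (-1/4 : ℝ) * hsq)
    · refine ⟨fun y => (if y = 0 then (1:ℝ) else 0)
          - (if y = ((q : ℕ) : ZMod (q ^ e)) then 1 else 0), ?_, ?_⟩
      · intro hzero
        have h0 := congrFun hzero 0
        have hne : (0 : ZMod (q ^ e)) ≠ ((q : ℕ) : ZMod (q ^ e)) := by
          intro hcontra
          have hdvd : q ^ e ∣ q := by
            rwa [eq_comm, ZMod.natCast_eq_zero_iff] at hcontra
          have hle := Nat.le_of_dvd (by omega) hdvd
          have hlt : q ^ 1 < q ^ e := Nat.pow_lt_pow_right (by omega) (by omega)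
          rw [pow_one] at hlt
          omega
        simp only [Pi.zero_apply, if_pos rfl, if_neg hne] at h0
        norm_num at h0
      · rw [hμ, zero_smul]
        exact eig_zero h4 he0
    · refine ⟨fun x => Frq q (pim q e he0 x) - Frq q (pim q e he0 x - 1)
          - ((-1 + Real.sqrt q)/2) * ((if pim q e he0 x = 0 then (1:ℝ) else 0)
              - (if pim q e he0 x = 1 then 1 else 0)), ?_, ?_⟩
      · intro hzero
        have h0 := congrFun hzero 0
        rw [map_zero (pim q e he0)] at h0
        simp only [Pi.zero_apply, Frq_zero, zero_sub, Frq_neg_one h4, if_pos rfl,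
          if_neg (zero_ne_one (α := ZMod q))] at h0
        norm_num at h0
        nlinarith [hsq1, h0]
      · have hμ' : μ = (q : ℝ) ^ (e - 1) * ((-1 - Real.sqrt q)/2) := by rw [hμ]; ring
        rw [hμ']
        exact eig_rs h4 he0 ((-1 - Real.sqrt q)/2) ((-1 + Real.sqrt q)/2)
          (by ring) (by linear_combination (-1/4 : ℝ) * hsq)
end

section
/- For q ≡ 1 (mod 4) prime and odd e ≥ 3, the second-largest absolute value λ(G_{q^e}) of an eigenvalue of the adjacency matrix of G_{q^e} equals (q^{e−1/2} + q^{e−1})/2, and in particular λ(G_{q^e}) = Ω(d^{1/2 + (e−1)/(2e)}) is superlinear in √d, where d = (q^e − q^{e−1})/2 is the degree. -/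
/-- λ(G_{q^e}): the largest absolute value of an adjacency eigenvalue other than the trivial
(largest) eigenvalue d = (q^e−q^{e−1})/2. -/
noncomputable def lamG (q e : ℕ) [Fact q.Prime] : ℝ :=
  sSup {x : ℝ | ∃ μ : ℝ, x = |μ| ∧ μ ≠ ((q : ℝ) ^ e - (q : ℝ) ^ (e - 1)) / 2 ∧
    ∃ v : ZMod (q ^ e) → ℝ, v ≠ 0 ∧ (adjMat q e).mulVec v = μ • v}



open Finset AddChar

namespace Aux14

lemma sumE {N : ℕ} [NeZero N] (b : ZMod N) :
    ∑ x : ZMod N, ZMod.stdAddChar (b * x) = if b = 0 then (N : ℂ) else 0 := by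
  classical
  have h : ∀ x : ZMod N, ZMod.stdAddChar (b * x) = (ZMod.stdAddChar.mulShift b) x :=
    fun x => (AddChar.mulShift_apply).symm
  simp_rw [h]
  rw [AddChar.sum_eq_ite]
  have h0 : (ZMod.stdAddChar.mulShift b = 0) ↔ b = 0 := by
    constructor
    · intro hb
      by_contra hbne
      exact ZMod.isPrimitive_stdAddChar N hbne (hb.trans rfl)
    · intro hb; rw [hb, AddChar.mulShift_zero]; rfl
  simp [h0, ZMod.card]

lemma std_mul_cast {n M : ℕ} [NeZero n] [NeZero M] (d : ℕ) (hd : d ≠ 0) (h : n = d * M)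
    (y : ZMod n) :
    ZMod.stdAddChar ((d : ZMod n) * y) = ZMod.stdAddChar ((y.val : ZMod M)) := by
  have h1 : (d : ZMod n) * y = (((d * y.val : ℕ) : ℤ) : ZMod n) := by
    push_cast
    rw [ZMod.natCast_val, ZMod.cast_id]
  have h2 : ((y.val : ZMod M)) = (((y.val : ℕ) : ℤ) : ZMod M) := by push_cast; rfl
  rw [h1, h2, ZMod.stdAddChar_coe, ZMod.stdAddChar_coe]
  congr 1
  have hM : (M : ℂ) ≠ 0 := Nat.cast_ne_zero.mpr (NeZero.ne M)
  have hd' : (d : ℂ) ≠ 0 := Nat.cast_ne_zero.mpr hd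
  subst h
  push_cast
  have hdM : ((d:ℂ) * M) ≠ 0 := mul_ne_zero hd' hM
  field_simp

end Aux14

lemma sum_decomp {N q m : ℕ} [NeZero N] [NeZero q] [NeZero m] (h : N = q * m)
    (g : ZMod N → ℂ) :
    ∑ s : ZMod N, g s = ∑ a : ZMod q, ∑ t : ZMod m, g ((a.val + q * t.val : ℕ) : ZMod N) := by
  have := (Fintype.sum_prod_type (f := fun p : ZMod q × ZMod m =>
    g ((p.1.val + q * p.2.val : ℕ) : ZMod N))).symm
  rw [this]
  apply (Fintype.sum_bijective (fun p : ZMod q × ZMod m => ((p.1.val + q * p.2.val : ℕ) : ZMod N))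
    ?_ _ _ (fun p => rfl)).symm
  rw [Fintype.bijective_iff_injective_and_card]
  constructor
  · intro p p' hpp
    have hb : ∀ r : ZMod q × ZMod m, r.1.val + q * r.2.val < N := by
      intro r
      rw [h]
      calc r.1.val + q * r.2.val < q + q * r.2.val := by
            exact Nat.add_lt_add_right (ZMod.val_lt r.1) _
        _ = q * (r.2.val + 1) := by ring
        _ ≤ q * m := Nat.mul_le_mul_left q (ZMod.val_lt r.2)
    have hv : p.1.val + q * p.2.val = p'.1.val + q * p'.2.val := by
      have := congrArg ZMod.val hpp
      rwa [ZMod.val_cast_of_lt (hb p), ZMod.val_cast_of_lt (hb p')] at this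
    have hq0 : p.1.val = p'.1.val := by
      have h1 : (p.1.val + q * p.2.val) % q = p.1.val := by
        rw [Nat.add_mul_mod_self_left, Nat.mod_eq_of_lt (ZMod.val_lt p.1)]
      have h2 : (p'.1.val + q * p'.2.val) % q = p'.1.val := by
        rw [Nat.add_mul_mod_self_left, Nat.mod_eq_of_lt (ZMod.val_lt p'.1)]
      rw [← h1, ← h2, hv]
    have ht0 : p.2.val = p'.2.val := by
      have h1 : (p.1.val + q * p.2.val) / q = p.2.val := by
        rw [Nat.add_mul_div_left _ _ (NeZero.pos q), Nat.div_eq_of_lt (ZMod.val_lt p.1), zero_add]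
      have h2 : (p'.1.val + q * p'.2.val) / q = p'.2.val := by
        rw [Nat.add_mul_div_left _ _ (NeZero.pos q), Nat.div_eq_of_lt (ZMod.val_lt p'.1), zero_add]
      rw [← h1, ← h2, hv]
    ext
    · exact ZMod.val_injective _ hq0
    · exact ZMod.val_injective _ ht0
  · simp [ZMod.card, h]

instance instNZ (q e : ℕ) [Fact q.Prime] : NeZero (q ^ e) :=
  ⟨pow_ne_zero _ (Nat.Prime.ne_zero Fact.out)⟩

instance instNZ' (q : ℕ) [Fact q.Prime] : NeZero q := ⟨(Fact.out : q.Prime).ne_zero⟩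



namespace Aux14

noncomputable def lam (q e : ℕ) [Fact q.Prime] (b : ZMod (q ^ e)) : ℂ :=
  ∑ s : ZMod (q ^ e), (if chi q e s = 1 then 1 else 0) * ZMod.stdAddChar (b * s)

lemma leg_eq (q : ℕ) [Fact q.Prime] (x : ℤ) :
    legendreSym q x = quadraticChar (ZMod q) (x : ZMod q) := rfl

lemma indicator_eq (q e : ℕ) [Fact q.Prime] (s : ZMod (q ^ e)) :
    (if chi q e s = 1 then (1 : ℂ) else 0)
      = (((legendreSym q (s.val : ℤ) : ℤ) : ℂ) ^ 2 + ((legendreSym q (s.val : ℤ) : ℤ) : ℂ)) / 2 := by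
  unfold chi
  rcases eq_or_ne (((s.val : ℤ) : ZMod q)) 0 with h | h
  · rw [(legendreSym.eq_zero_iff q _).mpr h]
    norm_num
  · rcases legendreSym.eq_one_or_neg_one q h with h1 | h1 <;> rw [h1] <;> norm_num

lemma lam_formula (q e : ℕ) [Fact q.Prime] (he : 1 ≤ e) (b : ZMod (q ^ e)) :
    2 * lam q e b =
      (if b = 0 then ((q : ℂ) ^ e) else 0)
      - (if ((b.val : ℕ) : ZMod (q ^ (e - 1))) = 0 then ((q : ℂ) ^ (e - 1)) else 0)
      + (∑ a : ZMod q, ((quadraticChar (ZMod q) a : ℤ) : ℂ)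
            * ZMod.stdAddChar (b * ((a.val : ℕ) : ZMod (q ^ e))))
        * (if ((b.val : ℕ) : ZMod (q ^ (e - 1))) = 0 then ((q : ℂ) ^ (e - 1)) else 0) := by
  have hq0 : q ≠ 0 := (Fact.out : q.Prime).ne_zero
  have hN : q ^ e = q * q ^ (e - 1) := by
    conv_lhs => rw [show e = (e - 1) + 1 by omega]
    rw [pow_succ']
  have hN' : q ^ e = q ^ (e - 1) * q := by rw [hN, mul_comm]
  have hdvd : q ^ (e - 1) ∣ q ^ e := ⟨q, hN'⟩
  have hcast : ∀ x : ZMod (q ^ e),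
      ((x.val : ℕ) : ZMod (q ^ (e - 1))) = ZMod.castHom hdvd (ZMod (q ^ (e - 1))) x := by
    intro x
    rw [ZMod.natCast_val, ZMod.castHom_apply]
  -- the t-sum
  have hTsum : ∑ t : ZMod (q ^ (e - 1)), ZMod.stdAddChar (b * ((q * t.val : ℕ) : ZMod (q ^ e)))
      = (if ((b.val : ℕ) : ZMod (q ^ (e - 1))) = 0 then ((q : ℂ) ^ (e - 1)) else 0) := by
    have key : ∀ t : ZMod (q ^ (e - 1)),
        ZMod.stdAddChar (b * ((q * t.val : ℕ) : ZMod (q ^ e)))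
          = ZMod.stdAddChar (((b.val : ℕ) : ZMod (q ^ (e - 1))) * t) := by
      intro t
      have h1 : b * ((q * t.val : ℕ) : ZMod (q ^ e))
          = (q : ZMod (q ^ e)) * (b * ((t.val : ℕ) : ZMod (q ^ e))) := by
        push_cast; ring
      rw [h1, std_mul_cast q hq0 hN]
      congr 1
      rw [hcast, map_mul, ← hcast b]
      congr 1
      rw [map_natCast, ZMod.natCast_zmod_val]
    rw [Finset.sum_congr rfl (fun t _ => key t), sumE]
    split_ifs <;> push_cast <;> simp
  -- split the indicator
  have hsplit : 2 * lam q e b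
      = (∑ s : ZMod (q ^ e), ((legendreSym q (s.val : ℤ) : ℤ) : ℂ) ^ 2 * ZMod.stdAddChar (b * s))
      + (∑ s : ZMod (q ^ e), ((legendreSym q (s.val : ℤ) : ℤ) : ℂ) * ZMod.stdAddChar (b * s)) := by
    unfold lam
    rw [Finset.mul_sum, ← Finset.sum_add_distrib]
    refine Finset.sum_congr rfl fun s _ => ?_
    rw [indicator_eq]
    ring
  -- L² = 1 - δ
  have hL2 : ∀ s : ZMod (q ^ e), ((legendreSym q (s.val : ℤ) : ℤ) : ℂ) ^ 2
      = 1 - (if ((s.val : ℕ) : ZMod q) = 0 then (1 : ℂ) else 0) := by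
    intro s
    rcases eq_or_ne (((s.val : ℕ) : ZMod q)) 0 with h | h
    · rw [(legendreSym.eq_zero_iff q _).mpr (by push_cast; exact_mod_cast h), if_pos h]
      norm_num
    · rcases legendreSym.eq_one_or_neg_one q (a := (s.val : ℤ))
        (by push_cast; exact_mod_cast h) with h1 | h1 <;> rw [h1, if_neg h] <;> norm_num
  have hsq : (∑ s : ZMod (q ^ e), ((legendreSym q (s.val : ℤ) : ℤ) : ℂ) ^ 2
        * ZMod.stdAddChar (b * s))
      = (if b = 0 then ((q : ℂ) ^ e) else 0)
        - (∑ s : ZMod (q ^ e), (if ((s.val : ℕ) : ZMod q) = 0 then (1 : ℂ) else 0)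
            * ZMod.stdAddChar (b * s)) := by
    rw [Finset.sum_congr rfl (fun s _ => by rw [hL2 s, sub_mul, one_mul]),
      Finset.sum_sub_distrib, sumE]
    split_ifs <;> push_cast <;> simp
  -- pointwise facts at decomposed points
  have hlt : ∀ (a : ZMod q) (t : ZMod (q ^ (e - 1))), a.val + q * t.val < q ^ e := by
    intro a t
    rw [hN]
    calc a.val + q * t.val < q + q * t.val := Nat.add_lt_add_right (ZMod.val_lt a) _
      _ = q * (t.val + 1) := by ring
      _ ≤ q * q ^ (e - 1) := Nat.mul_le_mul_left q (ZMod.val_lt t)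
  have hval : ∀ (a : ZMod q) (t : ZMod (q ^ (e - 1))),
      (((a.val + q * t.val : ℕ) : ZMod (q ^ e))).val = a.val + q * t.val :=
    fun a t => ZMod.val_cast_of_lt (hlt a t)
  have hmodq : ∀ (a : ZMod q) (t : ZMod (q ^ (e - 1))),
      ((a.val + q * t.val : ℕ) : ZMod q) = a := by
    intro a t
    push_cast
    simp [ZMod.natCast_self, ZMod.natCast_zmod_val]
  have hstd : ∀ (a : ZMod q) (t : ZMod (q ^ (e - 1))),
      ZMod.stdAddChar (b * ((a.val + q * t.val : ℕ) : ZMod (q ^ e)))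
        = ZMod.stdAddChar (b * ((a.val : ℕ) : ZMod (q ^ e)))
          * ZMod.stdAddChar (b * ((q * t.val : ℕ) : ZMod (q ^ e))) := by
    intro a t
    rw [← AddChar.map_add_eq_mul, ← mul_add]
    congr 2
    push_cast
    ring
  -- delta sum
  have hdelta : (∑ s : ZMod (q ^ e), (if ((s.val : ℕ) : ZMod q) = 0 then (1 : ℂ) else 0)
        * ZMod.stdAddChar (b * s))
      = (if ((b.val : ℕ) : ZMod (q ^ (e - 1))) = 0 then ((q : ℂ) ^ (e - 1)) else 0) := by
    rw [sum_decomp hN]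
    have : ∀ (a : ZMod q) (t : ZMod (q ^ (e - 1))),
        (if ((((a.val + q * t.val : ℕ) : ZMod (q ^ e)).val : ℕ) : ZMod q) = 0 then (1 : ℂ) else 0)
          * ZMod.stdAddChar (b * ((a.val + q * t.val : ℕ) : ZMod (q ^ e)))
        = ((if a = 0 then (1 : ℂ) else 0) * ZMod.stdAddChar (b * ((a.val : ℕ) : ZMod (q ^ e))))
          * ZMod.stdAddChar (b * ((q * t.val : ℕ) : ZMod (q ^ e))) := by
      intro a t
      rw [hval, hmodq, hstd, mul_assoc]
    rw [Finset.sum_congr rfl fun a _ => Finset.sum_congr rfl fun t _ => this a t]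
    have hfac : ∀ a : ZMod q, ∑ t : ZMod (q ^ (e - 1)),
        ((if a = 0 then (1 : ℂ) else 0) * ZMod.stdAddChar (b * ((a.val : ℕ) : ZMod (q ^ e))))
          * ZMod.stdAddChar (b * ((q * t.val : ℕ) : ZMod (q ^ e)))
        = ((if a = 0 then (1 : ℂ) else 0) * ZMod.stdAddChar (b * ((a.val : ℕ) : ZMod (q ^ e))))
          * (if ((b.val : ℕ) : ZMod (q ^ (e - 1))) = 0 then ((q : ℂ) ^ (e - 1)) else 0) := by
      intro a
      rw [← Finset.mul_sum, hTsum]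
    rw [Finset.sum_congr rfl fun a _ => hfac a, ← Finset.sum_mul]
    congr 1
    rw [Finset.sum_congr rfl (fun a _ => by rw [ite_mul, zero_mul, one_mul] :
      ∀ a ∈ Finset.univ, _ = if a = 0 then ZMod.stdAddChar (b * (((a : ZMod q).val : ℕ) : ZMod (q ^ e))) else 0)]
    rw [Finset.sum_ite_eq' Finset.univ (0 : ZMod q)]
    simp
  -- legendre sum
  have hleg : (∑ s : ZMod (q ^ e), ((legendreSym q (s.val : ℤ) : ℤ) : ℂ)
        * ZMod.stdAddChar (b * s))
      = (∑ a : ZMod q, ((quadraticChar (ZMod q) a : ℤ) : ℂ)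
            * ZMod.stdAddChar (b * ((a.val : ℕ) : ZMod (q ^ e))))
        * (if ((b.val : ℕ) : ZMod (q ^ (e - 1))) = 0 then ((q : ℂ) ^ (e - 1)) else 0) := by
    rw [sum_decomp hN]
    have : ∀ (a : ZMod q) (t : ZMod (q ^ (e - 1))),
        ((legendreSym q ((((a.val + q * t.val : ℕ) : ZMod (q ^ e)).val : ℕ) : ℤ) : ℤ) : ℂ)
          * ZMod.stdAddChar (b * ((a.val + q * t.val : ℕ) : ZMod (q ^ e)))
        = (((quadraticChar (ZMod q) a : ℤ) : ℂ)
            * ZMod.stdAddChar (b * ((a.val : ℕ) : ZMod (q ^ e))))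
          * ZMod.stdAddChar (b * ((q * t.val : ℕ) : ZMod (q ^ e))) := by
      intro a t
      rw [hval, hstd, mul_assoc]
      congr 2
      rw [leg_eq]
      congr 1
      rw [show (((a.val + q * t.val : ℕ) : ℤ) : ZMod q) = ((a.val + q * t.val : ℕ) : ZMod q) by
        push_cast; ring]
      rw [hmodq]
    rw [Finset.sum_congr rfl fun a _ => Finset.sum_congr rfl fun t _ => this a t]
    rw [Finset.sum_congr rfl fun a _ => (by rw [← Finset.mul_sum, hTsum] :
        ∑ t : ZMod (q ^ (e - 1)), (((quadraticChar (ZMod q) (a : ZMod q) : ℤ) : ℂ)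
            * ZMod.stdAddChar (b * (((a : ZMod q).val : ℕ) : ZMod (q ^ e))))
          * ZMod.stdAddChar (b * ((q * t.val : ℕ) : ZMod (q ^ e)))
        = (((quadraticChar (ZMod q) (a : ZMod q) : ℤ) : ℂ)
            * ZMod.stdAddChar (b * (((a : ZMod q).val : ℕ) : ZMod (q ^ e))))
          * (if ((b.val : ℕ) : ZMod (q ^ (e - 1))) = 0 then ((q : ℂ) ^ (e - 1)) else 0))]
    rw [← Finset.sum_mul]
  rw [hsplit, hsq, hdelta, hleg]

end Aux14

namespace Aux14

noncomputable def chiC (q : ℕ) [Fact q.Prime] : MulChar (ZMod q) ℂ :=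
  (quadraticChar (ZMod q)).ringHomComp (Int.castRingHom ℂ)

lemma lam_zero (q e : ℕ) [Fact q.Prime] (hq2 : q ≠ 2) (he : 1 ≤ e) :
    lam q e 0 = ((q : ℂ) ^ e - (q : ℂ) ^ (e - 1)) / 2 := by
  have h := lam_formula q e he 0
  have hv : ((0 : ZMod (q ^ e)).val : ℕ) = 0 := ZMod.val_zero
  rw [hv] at h
  have hG : (∑ a : ZMod q, ((quadraticChar (ZMod q) a : ℤ) : ℂ)
      * ZMod.stdAddChar ((0 : ZMod (q ^ e)) * ((a.val : ℕ) : ZMod (q ^ e)))) = 0 := by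
    have h1 : ∀ a : ZMod q, ((quadraticChar (ZMod q) a : ℤ) : ℂ)
        * ZMod.stdAddChar ((0 : ZMod (q ^ e)) * ((a.val : ℕ) : ZMod (q ^ e)))
        = ((quadraticChar (ZMod q) a : ℤ) : ℂ) := by
      intro a
      rw [zero_mul, AddChar.map_zero_eq_one, mul_one]
    rw [Finset.sum_congr rfl fun a _ => h1 a]
    rw [show (∑ a : ZMod q, ((quadraticChar (ZMod q) a : ℤ) : ℂ))
        = (((∑ a : ZMod q, quadraticChar (ZMod q) a : ℤ)) : ℂ) by push_cast; rfl]
    rw [quadraticChar_sum_zero (by rw [ZMod.ringChar_zmod_n]; exact hq2)]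
    exact Int.cast_zero
  rw [if_pos rfl, if_pos (by exact Nat.cast_zero), hG] at h
  field_simp at h ⊢
  linear_combination h

lemma lam_of_ne (q e : ℕ) [Fact q.Prime] (he : 1 ≤ e) (b : ZMod (q ^ e))
    (hb : ((b.val : ℕ) : ZMod (q ^ (e - 1))) ≠ 0) : lam q e b = 0 := by
  have h := lam_formula q e he b
  have hb0 : b ≠ 0 := by
    rintro rfl
    exact hb (by rw [ZMod.val_zero]; exact Nat.cast_zero)
  rw [if_neg hb0, if_neg hb] at h
  have : (2 : ℂ) * lam q e b = 0 := by rw [h]; ring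
  have h2 : (2 : ℂ) ≠ 0 := two_ne_zero
  exact (mul_eq_zero.mp this).resolve_left h2

lemma lam_B (q e : ℕ) [Fact q.Prime] (he : 1 ≤ e) (c : ZMod q) (hc : c ≠ 0) :
    2 * lam q e (((q ^ (e - 1) * c.val : ℕ) : ZMod (q ^ e)))
      = ((q : ℂ) ^ (e - 1))
        * (gaussSum (chiC q) ((ZMod.stdAddChar (N := q)).mulShift c) - 1) := by
  have hq0 : q ≠ 0 := (Fact.out : q.Prime).ne_zero
  have hN' : q ^ e = q ^ (e - 1) * q := by
    conv_lhs => rw [show e = (e - 1) + 1 by omega]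
    rw [pow_succ]
  set b := ((q ^ (e - 1) * c.val : ℕ) : ZMod (q ^ e)) with hbdef
  have hlt : q ^ (e - 1) * c.val < q ^ e := by
    rw [hN']
    exact mul_lt_mul_of_pos_left (ZMod.val_lt c) (pow_pos (Nat.pos_of_ne_zero hq0) _)
  have hvb : b.val = q ^ (e - 1) * c.val := ZMod.val_cast_of_lt hlt
  have hb0 : b ≠ 0 := by
    intro h0
    apply hc
    have : b.val = 0 := by rw [h0]; exact ZMod.val_zero
    rw [hvb] at this
    have : c.val = 0 := by
      rcases Nat.mul_eq_zero.mp this with h | h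
      · exact absurd h (pow_ne_zero _ hq0)
      · exact h
    exact (ZMod.val_eq_zero c).mp this
  have hcast0 : ((b.val : ℕ) : ZMod (q ^ (e - 1))) = 0 := by
    rw [hvb, Nat.cast_mul, ZMod.natCast_self, zero_mul]
  have hdvdq : q ∣ q ^ e := ⟨q ^ (e - 1), by rw [hN']; ring⟩
  have hcastq : ∀ x : ZMod (q ^ e), ((x.val : ℕ) : ZMod q) = ZMod.castHom hdvdq (ZMod q) x := by
    intro x
    rw [ZMod.natCast_val, ZMod.castHom_apply]
  have hG : (∑ a : ZMod q, ((quadraticChar (ZMod q) a : ℤ) : ℂ)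
        * ZMod.stdAddChar (b * ((a.val : ℕ) : ZMod (q ^ e))))
      = gaussSum (chiC q) ((ZMod.stdAddChar (N := q)).mulShift c) := by
    unfold gaussSum
    refine Finset.sum_congr rfl fun a _ => ?_
    have hl : ((quadraticChar (ZMod q) a : ℤ) : ℂ) = chiC q a := by
      simp [chiC, MulChar.ringHomComp]
    rw [hl]
    congr 1
    have h1 : b * ((a.val : ℕ) : ZMod (q ^ e))
        = ((q ^ (e - 1) : ℕ) : ZMod (q ^ e))
          * (((c.val : ℕ) : ZMod (q ^ e)) * ((a.val : ℕ) : ZMod (q ^ e))) := by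
      rw [hbdef]; push_cast; ring
    rw [h1]
    rw [std_mul_cast (q ^ (e - 1)) (pow_ne_zero _ hq0) hN']
    rw [AddChar.mulShift_apply]
    congr 1
    rw [hcastq, map_mul]
    have h2 : ∀ u : ZMod q, (ZMod.castHom hdvdq (ZMod q)) ((u.val : ℕ) : ZMod (q ^ e)) = u := by
      intro u
      rw [map_natCast, ZMod.natCast_zmod_val]
    rw [h2, h2]
  have h := lam_formula q e he b
  rw [if_neg hb0, if_pos hcast0, hG] at h
  rw [h]
  ring

end Aux14

namespace Aux14

lemma gauss_vals (q : ℕ) [Fact q.Prime] (hq4 : q % 4 = 1) (c : ZMod q) (hc : c ≠ 0) :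
    gaussSum (chiC q) ((ZMod.stdAddChar (N := q)).mulShift c) = ((Real.sqrt q : ℝ) : ℂ)
    ∨ gaussSum (chiC q) ((ZMod.stdAddChar (N := q)).mulShift c) = -((Real.sqrt q : ℝ) : ℂ) := by
  have hchar2 : ringChar (ZMod q) ≠ 2 := by rw [ZMod.ringChar_zmod_n]; omega
  have hχ1 : chiC q ≠ 1 :=
    (MulChar.ringHomComp_ne_one_iff (f := Int.castRingHom ℂ) Int.cast_injective).mpr
      (quadraticChar_ne_one hchar2)
  have hquad := (quadraticChar_isQuadratic (ZMod q)).comp (Int.castRingHom ℂ)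
  have hψ : ((ZMod.stdAddChar (N := q)).mulShift c).IsPrimitive :=
    AddChar.IsPrimitive.of_ne_one (ZMod.isPrimitive_stdAddChar q hc)
  have hsq := gaussSum_sq hχ1 hquad hψ
  have hneg1 : chiC q (-1) = 1 := by
    have h1 : quadraticChar (ZMod q) (-1) = 1 := by
      rw [quadraticChar_neg_one hchar2, ZMod.card]
      exact ZMod.χ₄_nat_one_mod_four hq4
    rw [chiC, MulChar.ringHomComp_apply, h1]
    simp
  rw [hneg1, one_mul, ZMod.card] at hsq
  have hr : (((Real.sqrt q : ℝ)) : ℂ) ^ 2 = (q : ℂ) := by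
    have h0 : Real.sqrt (q : ℝ) ^ 2 = (q : ℝ) := Real.sq_sqrt (by positivity)
    exact_mod_cast h0
  set g := gaussSum (chiC q) ((ZMod.stdAddChar (N := q)).mulShift c)
  have hz : (g - ((Real.sqrt q : ℝ) : ℂ)) * (g + ((Real.sqrt q : ℝ) : ℂ)) = 0 := by
    have : g ^ 2 - (((Real.sqrt q : ℝ)) : ℂ) ^ 2 = 0 := by rw [hsq, hr]; ring
    linear_combination this
  rcases mul_eq_zero.mp hz with h | h
  · left; linear_combination h
  · right; linear_combination h

lemma exists_sign (q : ℕ) [Fact q.Prime] (hq4 : q % 4 = 1) :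
    ∃ c : ZMod q, c ≠ 0 ∧
      gaussSum (chiC q) ((ZMod.stdAddChar (N := q)).mulShift c) = -((Real.sqrt q : ℝ) : ℂ) := by
  have hchar2 : ringChar (ZMod q) ≠ 2 := by rw [ZMod.ringChar_zmod_n]; omega
  have hone : (1 : ZMod q) ≠ 0 := one_ne_zero
  rcases gauss_vals q hq4 1 hone with h1 | h1
  · obtain ⟨u, hu⟩ := FiniteField.exists_nonsquare (F := ZMod q) hchar2
    have hu0 : u ≠ 0 := by rintro rfl; exact hu ⟨0, by ring⟩
    refine ⟨u, hu0, ?_⟩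
    have huu : IsUnit u := Ne.isUnit hu0
    have hms := gaussSum_mulShift (chiC q) (ZMod.stdAddChar (N := q)) huu.unit
    rw [IsUnit.unit_spec] at hms
    have hχu : chiC q u = -1 := by
      have h2 := quadraticChar_neg_one_iff_not_isSquare.mpr hu
      rw [chiC, MulChar.ringHomComp_apply, h2]
      simp
    rw [hχu] at hms
    rw [AddChar.mulShift_one] at h1
    rw [show gaussSum (chiC q) (ZMod.stdAddChar.mulShift u)
        = -gaussSum (chiC q) (ZMod.stdAddChar (N := q)) by linear_combination -hms, h1]
  · exact ⟨1, hone, by rwa [AddChar.mulShift_one] at h1 ⊢⟩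

lemma exists_c (q e : ℕ) [Fact q.Prime] (he : 1 ≤ e) (b : ZMod (q ^ e)) (hb0 : b ≠ 0)
    (hcast : ((b.val : ℕ) : ZMod (q ^ (e - 1))) = 0) :
    ∃ c : ZMod q, c ≠ 0 ∧ b = ((q ^ (e - 1) * c.val : ℕ) : ZMod (q ^ e)) := by
  have hq0 : q ≠ 0 := (Fact.out : q.Prime).ne_zero
  have hN' : q ^ e = q ^ (e - 1) * q := by
    conv_lhs => rw [show e = (e - 1) + 1 by omega]
    rw [pow_succ]
  have hm : q ^ (e - 1) ∣ b.val := (ZMod.natCast_eq_zero_iff _ _).mp hcast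
  obtain ⟨c₀, hc₀⟩ := hm
  have hlt : c₀ < q := by
    have hlt' : q ^ (e - 1) * c₀ < q ^ (e - 1) * q := by
      rw [← hc₀, ← hN']; exact ZMod.val_lt b
    exact lt_of_mul_lt_mul_left hlt' (Nat.zero_le _)
  have hc0ne : c₀ ≠ 0 := by
    rintro rfl
    rw [mul_zero] at hc₀
    exact hb0 ((ZMod.val_eq_zero b).mp hc₀)
  refine ⟨(c₀ : ZMod q), ?_, ?_⟩
  · intro h
    have := (ZMod.natCast_eq_zero_iff _ _).mp h
    exact hc0ne (Nat.eq_zero_of_dvd_of_lt this hlt)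
  · have hv : ((c₀ : ZMod q)).val = c₀ := ZMod.val_cast_of_lt hlt
    rw [hv, ← hc₀, ZMod.natCast_zmod_val]

lemma lam_cases (q e : ℕ) [Fact q.Prime] (hq4 : q % 4 = 1) (he : 1 ≤ e) (b : ZMod (q ^ e)) :
    lam q e b = ((q : ℂ) ^ e - (q : ℂ) ^ (e - 1)) / 2 ∨ lam q e b = 0
    ∨ lam q e b = ((q : ℂ) ^ (e - 1) * ((Real.sqrt q : ℝ) : ℂ) - (q : ℂ) ^ (e - 1)) / 2
    ∨ lam q e b = (-((q : ℂ) ^ (e - 1) * ((Real.sqrt q : ℝ) : ℂ)) - (q : ℂ) ^ (e - 1)) / 2 := by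
  have hq2 : q ≠ 2 := by
    intro h; rw [h] at hq4; omega
  by_cases hb0 : b = 0
  · left; rw [hb0]; exact lam_zero q e hq2 he
  by_cases hcast : ((b.val : ℕ) : ZMod (q ^ (e - 1))) = 0
  · obtain ⟨c, hc, rfl⟩ := exists_c q e he b hb0 hcast
    have hB := lam_B q e he c hc
    rcases gauss_vals q hq4 c hc with h | h <;> rw [h] at hB
    · right; right; left; linear_combination hB / 2
    · right; right; right; linear_combination hB / 2
  · right; left; exact lam_of_ne q e he b hcast

lemma lam_neg_exists (q e : ℕ) [Fact q.Prime] (hq4 : q % 4 = 1) (he : 1 ≤ e) :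
    ∃ b : ZMod (q ^ e),
      lam q e b = (-((q : ℂ) ^ (e - 1) * ((Real.sqrt q : ℝ) : ℂ)) - (q : ℂ) ^ (e - 1)) / 2 := by
  obtain ⟨c, hc, hg⟩ := exists_sign q hq4
  refine ⟨((q ^ (e - 1) * c.val : ℕ) : ZMod (q ^ e)), ?_⟩
  have hB := lam_B q e he c hc
  rw [hg] at hB
  linear_combination hB / 2

end Aux14

namespace Aux14

lemma chi_quad (q e : ℕ) [Fact q.Prime] (he : 1 ≤ e) (w : ZMod (q ^ e)) :
    chi q e w = quadraticChar (ZMod q)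
      ((ZMod.castHom (dvd_pow_self q (by omega : e ≠ 0)) (ZMod q)) w) := by
  unfold chi
  rw [leg_eq]
  congr 1
  rw [show (((w.val : ℕ) : ℤ) : ZMod q) = ((w.val : ℕ) : ZMod q) by push_cast; rfl]
  rw [ZMod.natCast_val, ZMod.castHom_apply]

lemma chi_neg (q e : ℕ) [Fact q.Prime] (hq4 : q % 4 = 1) (he : 1 ≤ e) (z : ZMod (q ^ e)) :
    chi q e (-z) = chi q e z := by
  have hchar2 : ringChar (ZMod q) ≠ 2 := by rw [ZMod.ringChar_zmod_n]; omega
  have hneg1 : quadraticChar (ZMod q) (-1) = 1 := by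
    rw [quadraticChar_neg_one hchar2, ZMod.card]
    exact ZMod.χ₄_nat_one_mod_four hq4
  rw [chi_quad q e he, chi_quad q e he, map_neg,
    show ∀ u : ZMod q, -u = (-1) * u from fun u => by ring, map_mul, hneg1, one_mul]

lemma chi_zero (q e : ℕ) [Fact q.Prime] : chi q e 0 ≠ 1 := by
  unfold chi
  rw [ZMod.val_zero]
  norm_num [legendreSym.at_zero]

lemma adj_iff (q e : ℕ) [Fact q.Prime] (hq4 : q % 4 = 1) (he : 1 ≤ e) (x y : ZMod (q ^ e)) :
    (Gqe q e).Adj x y ↔ chi q e (y - x) = 1 := by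
  constructor
  · intro h0; obtain ⟨-, -, h⟩ := (id h0 : x ≠ y ∧ chi q e (x - y) = 1 ∧ chi q e (y - x) = 1); exact h
  · intro h
    refine (⟨?_, ?_, h⟩ : x ≠ y ∧ chi q e (x - y) = 1 ∧ chi q e (y - x) = 1)
    · rintro rfl
      rw [sub_self] at h
      exact chi_zero q e h
    · rw [show x - y = -(y - x) by ring, chi_neg q e hq4 he]
      exact h

end Aux14

namespace Aux14

open Classical in
lemma eigen_char (q e : ℕ) [Fact q.Prime] (hq4 : q % 4 = 1) (he : 1 ≤ e)
    (b x : ZMod (q ^ e)) :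
    ∑ y : ZMod (q ^ e), (if (Gqe q e).Adj x y then (1 : ℂ) else 0) * ZMod.stdAddChar (b * y)
      = lam q e b * ZMod.stdAddChar (b * x) := by
  have h1 : ∀ y : ZMod (q ^ e), (if (Gqe q e).Adj x y then (1 : ℂ) else 0)
      = (if chi q e (y - x) = 1 then (1 : ℂ) else 0) := by
    intro y
    by_cases h : (Gqe q e).Adj x y
    · rw [if_pos h, if_pos ((adj_iff q e hq4 he x y).mp h)]
    · rw [if_neg h, if_neg (fun hc => h ((adj_iff q e hq4 he x y).mpr hc))]
  rw [Finset.sum_congr rfl fun y _ => by rw [h1 y]]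
  rw [← Equiv.sum_comp (Equiv.addLeft x) fun y =>
    (if chi q e (y - x) = 1 then (1 : ℂ) else 0) * ZMod.stdAddChar (b * y)]
  unfold lam
  rw [Finset.sum_mul]
  refine Finset.sum_congr rfl fun s _ => ?_
  simp only [Equiv.coe_addLeft]
  simp only [add_sub_cancel_left]
  rw [show b * (x + s) = b * x + b * s by ring, AddChar.map_add_eq_mul]
  ring

open Classical in
lemma adjMat_cast (q e : ℕ) [Fact q.Prime] (x y : ZMod (q ^ e)) :
    ((adjMat q e x y : ℝ) : ℂ) = (if (Gqe q e).Adj x y then (1 : ℂ) else 0) := by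
  by_cases h : (Gqe q e).Adj x y <;> simp [adjMat, h]

lemma eig_to_lam (q e : ℕ) [Fact q.Prime] (hq4 : q % 4 = 1) (he : 1 ≤ e)
    (μ : ℝ) (v : ZMod (q ^ e) → ℝ) (hv : v ≠ 0)
    (heig : (adjMat q e).mulVec v = μ • v) :
    ∃ b : ZMod (q ^ e), (μ : ℂ) = lam q e b := by
  classical
  set cb : ZMod (q ^ e) → ℂ := fun b => ∑ x : ZMod (q ^ e), (v x : ℂ) * ZMod.stdAddChar (b * x)
    with hcb
  have step1 : ∀ b, (μ : ℂ) * cb b = lam q e b * cb b := by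
    intro b
    have hL : ∑ x : ZMod (q ^ e), ((Matrix.mulVec (adjMat q e) v) x : ℂ) * ZMod.stdAddChar (b * x)
        = (μ : ℂ) * cb b := by
      rw [heig]
      rw [hcb, Finset.mul_sum]
      refine Finset.sum_congr rfl fun x _ => ?_
      simp only [Pi.smul_apply, smul_eq_mul]
      push_cast
      ring
    have hR : ∑ x : ZMod (q ^ e), ((Matrix.mulVec (adjMat q e) v) x : ℂ) * ZMod.stdAddChar (b * x)
        = lam q e b * cb b := by
      have hexp : ∀ x, ((Matrix.mulVec (adjMat q e) v) x : ℂ)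
          = ∑ y, (if (Gqe q e).Adj x y then (1 : ℂ) else 0) * (v y : ℂ) := by
        intro x
        rw [Matrix.mulVec, dotProduct]
        push_cast
        refine Finset.sum_congr rfl fun y _ => ?_
        rw [adjMat_cast]
      rw [Finset.sum_congr rfl fun x _ => by rw [hexp x, Finset.sum_mul]]
      rw [Finset.sum_comm]
      have hswap : ∀ y, ∑ x, ((if (Gqe q e).Adj x y then (1 : ℂ) else 0) * (v y : ℂ))
            * ZMod.stdAddChar (b * x)
          = (v y : ℂ) * (lam q e b * ZMod.stdAddChar (b * y)) := by
        intro y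
        rw [← eigen_char q e hq4 he b y, Finset.mul_sum]
        refine Finset.sum_congr rfl fun x _ => ?_
        rw [show (Gqe q e).Adj x y ↔ (Gqe q e).Adj y x from (Gqe q e).adj_comm x y]
        ring
      rw [Finset.sum_congr rfl fun y _ => hswap y, hcb, Finset.mul_sum]
      refine Finset.sum_congr rfl fun y _ => ?_
      ring
    rw [← hL, hR]
  have step2 : ∃ b, cb b ≠ 0 := by
    by_contra hall
    push_neg at hall
    apply hv
    funext x₀
    have h0 : ∑ b : ZMod (q ^ e), cb b * ZMod.stdAddChar (b * (-x₀)) = 0 := by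
      rw [Finset.sum_congr rfl fun b _ => by rw [hall b, zero_mul], Finset.sum_const_zero]
    rw [hcb] at h0
    have h1 : ∑ b : ZMod (q ^ e),
        (∑ x : ZMod (q ^ e), (v x : ℂ) * ZMod.stdAddChar (b * x)) * ZMod.stdAddChar (b * (-x₀))
        = ∑ x : ZMod (q ^ e), (v x : ℂ)
            * (if x - x₀ = 0 then ((q ^ e : ℕ) : ℂ) else 0) := by
      simp only [Finset.sum_mul]
      rw [Finset.sum_comm]
      refine Finset.sum_congr rfl fun x _ => ?_
      rw [← sumE (x - x₀), Finset.mul_sum]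
      refine Finset.sum_congr rfl fun b _ => ?_
      rw [show (x - x₀) * b = b * x + b * (-x₀) by ring, AddChar.map_add_eq_mul]
      ring
    rw [h1] at h0
    have h2 : ∑ x : ZMod (q ^ e), (v x : ℂ) * (if x - x₀ = 0 then ((q ^ e : ℕ) : ℂ) else 0)
        = (v x₀ : ℂ) * ((q ^ e : ℕ) : ℂ) := by
      rw [Finset.sum_eq_single x₀]
      · rw [sub_self, if_pos rfl]
      · intro y _ hy
        rw [if_neg (fun hc => hy (by linear_combination hc)), mul_zero]
      · intro h; exact absurd (Finset.mem_univ x₀) h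
    rw [h2] at h0
    have hN0 : ((q ^ e : ℕ) : ℂ) ≠ 0 := Nat.cast_ne_zero.mpr (NeZero.ne _)
    have := (mul_eq_zero.mp h0).resolve_right hN0
    exact_mod_cast this
  obtain ⟨b, hb⟩ := step2
  refine ⟨b, ?_⟩
  have := step1 b
  have h3 : ((μ : ℂ) - lam q e b) * cb b = 0 := by linear_combination this
  have := (mul_eq_zero.mp h3).resolve_right hb
  linear_combination this

lemma eig_exists (q e : ℕ) [Fact q.Prime] (hq4 : q % 4 = 1) (he : 1 ≤ e)
    (b : ZMod (q ^ e)) (r : ℝ) (hlam : lam q e b = (r : ℂ)) :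
    ∃ v : ZMod (q ^ e) → ℝ, v ≠ 0 ∧ (adjMat q e).mulVec v = r • v := by
  classical
  refine ⟨fun x => (ZMod.stdAddChar (b * x)).re, ?_, ?_⟩
  · intro h
    have h0 := congrFun h 0
    rw [mul_zero, AddChar.map_zero_eq_one] at h0
    simp at h0
  · funext x
    have key : (Matrix.mulVec (adjMat q e) fun x => (ZMod.stdAddChar (b * x)).re) x
        = (∑ y : ZMod (q ^ e), (if (Gqe q e).Adj x y then (1 : ℂ) else 0)
            * ZMod.stdAddChar (b * y)).re := by
      rw [Matrix.mulVec, dotProduct, Complex.re_sum]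
      refine Finset.sum_congr rfl fun y _ => ?_
      by_cases h : (Gqe q e).Adj x y
      · simp [adjMat, h]
      · simp [adjMat, h]
    rw [key, eigen_char q e hq4 he b x, hlam]
    simp [Complex.mul_re]

end Aux14

namespace Aux14

lemma lamG_eq (q e : ℕ) [Fact q.Prime] (hq4 : q % 4 = 1) (he : 1 ≤ e) :
    lamG q e = ((q : ℝ) ^ (e - 1) * Real.sqrt q + (q : ℝ) ^ (e - 1)) / 2 := by
  have hq1 : (1 : ℝ) ≤ (q : ℝ) := by
    have := (Fact.out : q.Prime).two_le
    exact_mod_cast Nat.one_le_iff_ne_zero.mpr (by omega)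
  have hA0 : (0 : ℝ) < (q : ℝ) ^ (e - 1) := by positivity
  have hs1 : (1 : ℝ) ≤ Real.sqrt q := by
    rw [show (1 : ℝ) = Real.sqrt 1 by simp]
    exact Real.sqrt_le_sqrt hq1
  set A : ℝ := (q : ℝ) ^ (e - 1) with hA
  set M₀ : ℝ := (A * Real.sqrt q + A) / 2 with hM₀
  have hM₀pos : 0 < M₀ := by
    have : 0 < A * Real.sqrt q := by positivity
    rw [hM₀]; linarith
  have hd0 : 0 ≤ ((q : ℝ) ^ e - (q : ℝ) ^ (e - 1)) / 2 := by
    have : (q : ℝ) ^ (e - 1) ≤ (q : ℝ) ^ e := pow_le_pow_right₀ hq1 (by omega)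
    linarith
  set S := {x : ℝ | ∃ μ : ℝ, x = |μ| ∧ μ ≠ ((q : ℝ) ^ e - (q : ℝ) ^ (e - 1)) / 2 ∧
    ∃ v : ZMod (q ^ e) → ℝ, v ≠ 0 ∧ (adjMat q e).mulVec v = μ • v} with hS
  have hmem : M₀ ∈ S := by
    obtain ⟨b, hb⟩ := lam_neg_exists q e hq4 he
    have hb' : lam q e b = ((-M₀ : ℝ) : ℂ) := by
      rw [hb, hM₀, hA]
      push_cast
      ring
    obtain ⟨v, hv0, hveig⟩ := eig_exists q e hq4 he b (-M₀) hb'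
    exact ⟨-M₀, by rw [abs_neg, abs_of_pos hM₀pos], by intro h; rw [← h] at hd0; linarith,
      v, hv0, hveig⟩
  have hub : ∀ z ∈ S, z ≤ M₀ := by
    rintro z ⟨μ, rfl, hμd, v, hv0, hveig⟩
    obtain ⟨b, hbl⟩ := eig_to_lam q e hq4 he μ v hv0 hveig
    rcases lam_cases q e hq4 he b with h | h | h | h
    · exfalso
      apply hμd
      have : (μ : ℂ) = ((((q : ℝ) ^ e - (q : ℝ) ^ (e - 1)) / 2 : ℝ) : ℂ) := by
        rw [hbl, h]; push_cast; ring
      exact_mod_cast this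
    · have : (μ : ℂ) = ((0 : ℝ) : ℂ) := by rw [hbl, h]; push_cast; ring
      have hμ : μ = 0 := by exact_mod_cast this
      rw [hμ, abs_zero]
      linarith
    · have : (μ : ℂ) = (((A * Real.sqrt q - A) / 2 : ℝ) : ℂ) := by
        rw [hbl, h, hA]; push_cast; ring
      have hμ : μ = (A * Real.sqrt q - A) / 2 := by exact_mod_cast this
      rw [hμ, hM₀]
      rw [abs_of_nonneg (by nlinarith)]
      nlinarith
    · have : (μ : ℂ) = ((-M₀ : ℝ) : ℂ) := by
        rw [hbl, h, hM₀, hA]; push_cast; ring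
      have hμ : μ = -M₀ := by exact_mod_cast this
      rw [hμ, abs_neg, abs_of_pos hM₀pos]
  have : lamG q e = sSup S := rfl
  rw [this]
  apply le_antisymm
  · exact Real.sSup_le hub hM₀pos.le
  · exact le_csSup ⟨M₀, fun z hz => hub z hz⟩ hmem

end Aux14

namespace Aux14

lemma part2 (q e : ℕ) [Fact q.Prime] (hq4 : q % 4 = 1) (he3 : 3 ≤ e) :
    (1 / 2 : ℝ) * ((((q : ℝ) ^ e - (q : ℝ) ^ (e - 1)) / 2)
        ^ ((1 : ℝ) / 2 + ((e : ℝ) - 1) / (2 * (e : ℝ)))) ≤ lamG q e := by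
  have he : 1 ≤ e := by omega
  have hq1 : (1 : ℝ) ≤ (q : ℝ) := by
    have := (Fact.out : q.Prime).two_le
    exact_mod_cast Nat.one_le_iff_ne_zero.mpr (by omega)
  have hq0 : (0 : ℝ) < (q : ℝ) := by linarith
  set α : ℝ := (1 : ℝ) / 2 + ((e : ℝ) - 1) / (2 * (e : ℝ)) with hα
  have heR : (1 : ℝ) ≤ (e : ℝ) := by exact_mod_cast he
  have hα0 : 0 ≤ α := by
    rw [hα]
    have h2e : (0:ℝ) < 2 * (e : ℝ) := by linarith
    have : 0 ≤ ((e : ℝ) - 1) / (2 * (e : ℝ)) := div_nonneg (by linarith) h2e.le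
    linarith
  set d : ℝ := ((q : ℝ) ^ e - (q : ℝ) ^ (e - 1)) / 2 with hd
  have hd0 : 0 ≤ d := by
    have : (q : ℝ) ^ (e - 1) ≤ (q : ℝ) ^ e := pow_le_pow_right₀ hq1 (by omega)
    rw [hd]; linarith
  have hdq : d ≤ (q : ℝ) ^ e := by
    have h1 : 0 < (q : ℝ) ^ (e - 1) := by positivity
    have h2 : (q : ℝ) ^ e - (q : ℝ) ^ (e - 1) ≤ (q : ℝ) ^ e := by linarith
    have h3 : (0:ℝ) < (q : ℝ) ^ e := by positivity
    rw [hd]; linarith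
  have step1 : d ^ α ≤ ((q : ℝ) ^ e) ^ α := Real.rpow_le_rpow hd0 hdq hα0
  have step2 : ((q : ℝ) ^ e) ^ α = (q : ℝ) ^ (e - 1) * Real.sqrt q := by
    rw [← Real.rpow_natCast (q : ℝ) e, ← Real.rpow_mul hq0.le]
    have hmul : (e : ℝ) * α = ((e - 1 : ℕ) : ℝ) + 1 / 2 := by
      rw [hα, Nat.cast_sub he]
      have he0 : (e : ℝ) ≠ 0 := by linarith
      field_simp
      ring
    rw [hmul, Real.rpow_add hq0, Real.rpow_natCast, ← Real.sqrt_eq_rpow]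
  have : d ^ α ≤ (q : ℝ) ^ (e - 1) * Real.sqrt q := step2 ▸ step1
  rw [lamG_eq q e hq4 he]
  have hA : (0 : ℝ) < (q : ℝ) ^ (e - 1) := by positivity
  linarith

end Aux14


/-- For primes q ≡ 1 (mod 4) and odd e ≥ 3, λ(G_{q^e}) = (q^{e−1/2}+q^{e−1})/2,
and λ(G_{q^e}) = Ω(d^{1/2 + (e−1)/(2e)}) where d = (q^e−q^{e−1})/2 is the degree. -/
theorem stmt_14 (e : ℕ) (he : Odd e) (he3 : 3 ≤ e) :
    (∀ (q : ℕ) [Fact q.Prime], q % 4 = 1 →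
        lamG q e = ((q : ℝ) ^ (e - 1) * Real.sqrt q + (q : ℝ) ^ (e - 1)) / 2) ∧
      ∃ c : ℝ, 0 < c ∧ ∀ (q : ℕ) [Fact q.Prime], q % 4 = 1 →
        c * ((((q : ℝ) ^ e - (q : ℝ) ^ (e - 1)) / 2)
              ^ ((1 : ℝ) / 2 + ((e : ℝ) - 1) / (2 * (e : ℝ)))) ≤ lamG q e := by
  constructor
  · intro q _ hq4
    exact Aux14.lamG_eq q e hq4 (by omega)
  · exact ⟨1 / 2, by norm_num, fun q _ hq4 => Aux14.part2 q e hq4 he3⟩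
end

section
/- (Expander mixing lemma) Let G be a d-regular graph on n vertices with λ(G) the maximum of |λ_i| over nontrivial adjacency eigenvalues. Then for all vertex subsets U, W: |e(U,W) − (d/n)|U||W|| ≤ λ(G)·√(|U||W|), where e(U,W) counts edges with one endpoint in U and one in W (edges within U∩W counted twice). -/
open SimpleGraph Finset Matrix
open scoped RealInnerProductSpace

theorem mixing_key {V : Type*} [Fintype V] [DecidableEq V] (G : SimpleGraph V)
    [DecidableRel G.Adj] (d : ℕ) (hd : G.IsRegularOfDegree d) (lam : ℝ) (hlam0 : 0 ≤ lam)
    (hlam : ∀ (μ : ℝ) (v : V → ℝ), v ≠ 0 → (∑ x, v x) = 0 →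
      (adjMatrix ℝ G).mulVec v = μ • v → |μ| ≤ lam)
    (x y : V → ℝ) (hx : ∑ t, x t = 0) (hy : ∑ t, y t = 0) :
    |x ⬝ᵥ (G.adjMatrix ℝ) *ᵥ y|
      ≤ lam * (Real.sqrt (∑ t, x t ^ 2) * Real.sqrt (∑ t, y t ^ 2)) := by
  classical
  set A := G.adjMatrix ℝ with hAdef
  have hA : A.IsHermitian := by
    rw [Matrix.IsHermitian, Matrix.conjTranspose_eq_transpose_of_trivial]
    exact G.isSymm_adjMatrix
  -- column sums are all d
  have hcol : ∀ s : V, (∑ t, A t s) = (d : ℝ) := by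
    intro s
    simp only [hAdef, adjMatrix_apply]
    simp_rw [G.adj_comm]
    rw [Finset.sum_boole, ← neighborFinset_eq_filter]
    rw [card_neighborFinset_eq_degree]; exact_mod_cast hd s
  have hsumA : ∀ v : V → ℝ, (∑ t, (A *ᵥ v) t) = d * ∑ t, v t := by
    intro v
    simp only [Matrix.mulVec, dotProduct]
    rw [Finset.sum_comm]
    simp_rw [← Finset.sum_mul, hcol, ← Finset.mul_sum]
  -- eigen machinery
  set b := hA.eigenvectorBasis with hbdef
  set ev := hA.eigenvalues with hevdef
  have hmul : ∀ j, A *ᵥ ⇑(b j) = ev j • ⇑(b j) := hA.mulVec_eigenvectorBasis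
  have hbne : ∀ j, (⇑(b j) : V → ℝ) ≠ 0 := by
    intro j h
    exact b.orthonormal.ne_zero j (by ext t; exact congrFun h t)
  have hbsum : ∀ j, ev j ≠ (d : ℝ) → (∑ t, ⇑(b j) t) = 0 := by
    intro j hj
    have h1 := hsumA ⇑(b j)
    rw [hmul j] at h1
    simp only [Pi.smul_apply, smul_eq_mul] at h1
    rw [← Finset.mul_sum] at h1
    by_contra h
    exact hj (mul_right_cancel₀ h h1)
  have hlam' : ∀ j, ev j ≠ (d : ℝ) → |ev j| ≤ lam := fun j hj =>
    hlam (ev j) ⇑(b j) (hbne j) (hbsum j hj) (hmul j)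
  have hinner : ∀ u v : V → ℝ,
      (inner ℝ ((WithLp.equiv 2 (V → ℝ)).symm u) ((WithLp.equiv 2 (V → ℝ)).symm v) : ℝ)
        = u ⬝ᵥ v := by
    intro u v
    rw [WithLp.equiv_symm_apply, EuclideanSpace.inner_toLp_toLp]
    simp [dotProduct_comm]
  have hib : ∀ (i : V) (v : V → ℝ),
      (inner ℝ (b i) ((WithLp.equiv 2 (V → ℝ)).symm v) : ℝ) = ⇑(b i) ⬝ᵥ v := fun i v =>
    hinner _ _
  have hbi2 : ∀ (i : V) (v : V → ℝ),
      (inner ℝ ((WithLp.equiv 2 (V → ℝ)).symm v) (b i) : ℝ) = ⇑(b i) ⬝ᵥ v := fun i v => by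
    rw [real_inner_comm]; exact hib i v
  have hob : ∀ i j : V, ⇑(b i) ⬝ᵥ ⇑(b j) = if i = j then (1 : ℝ) else 0 := by
    intro i j
    have := orthonormal_iff_ite.mp b.orthonormal i j
    rw [← this]
    exact (hinner _ _).symm
  have hAT : Aᵀ = A := G.isSymm_adjMatrix
  have hbAy : ∀ (i : V) (v : V → ℝ), ⇑(b i) ⬝ᵥ (A *ᵥ v) = ev i * (⇑(b i) ⬝ᵥ v) := by
    intro i v
    rw [Matrix.dotProduct_mulVec]
    have hsymm : ⇑(b i) ᵥ* A = A *ᵥ ⇑(b i) := by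
      nth_rewrite 1 [← hAT]
      exact Matrix.vecMul_transpose A ⇑(b i)
    rw [hsymm, hmul i, smul_dotProduct, smul_eq_mul]
  -- main expansion
  have hmain : x ⬝ᵥ (A *ᵥ y) = ∑ i, (⇑(b i) ⬝ᵥ x) * (ev i * (⇑(b i) ⬝ᵥ y)) := by
    have h := OrthonormalBasis.sum_inner_mul_inner b
      ((WithLp.equiv 2 (V → ℝ)).symm x) ((WithLp.equiv 2 (V → ℝ)).symm (A *ᵥ y))
    simp only [hbi2, hib, hinner, hbAy] at h
    exact h.symm
  -- Parseval
  have hparx : ∀ v : V → ℝ, ∑ i, (⇑(b i) ⬝ᵥ v) ^ 2 = ∑ t, v t ^ 2 := by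
    intro v
    have h := OrthonormalBasis.sum_inner_mul_inner b
      ((WithLp.equiv 2 (V → ℝ)).symm v) ((WithLp.equiv 2 (V → ℝ)).symm v)
    simp only [hbi2, hib, hinner] at h
    simpa [dotProduct, sq] using h
  -- per-eigenvalue bound
  have hbound : ∀ i : V, (⇑(b i) ⬝ᵥ x) ≠ 0 → |ev i| ≤ lam := by
    intro i hci
    rcases eq_or_ne (ev i) (d : ℝ) with hdi | hdi
    · -- eigenvalue equal to d : build the projection onto the d-eigenspace
      set F : Finset V := Finset.univ.filter (fun j => ev j = (d : ℝ)) with hF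
      set w : V → ℝ := ∑ j ∈ F, (⇑(b j) ⬝ᵥ x) • ⇑(b j) with hw
      have hiF : i ∈ F := by simp [hF, hdi]
      have hAw : A *ᵥ w = (d : ℝ) • w := by
        rw [hw]
        rw [show A *ᵥ (∑ j ∈ F, (⇑(b j) ⬝ᵥ x) • ⇑(b j))
            = ∑ j ∈ F, (⇑(b j) ⬝ᵥ x) • (A *ᵥ ⇑(b j)) by
          simp only [← Matrix.mulVecLin_apply, map_sum, _root_.map_smul]]
        rw [Finset.smul_sum]
        refine Finset.sum_congr rfl fun j hj => ?_
        rw [hmul j, (Finset.mem_filter.1 hj).2, smul_comm]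
      have hexp' : ∀ (u cf : V → ℝ), (∑ j ∈ F, cf j • ⇑(b j)) ⬝ᵥ u
          = ∑ j ∈ F, cf j * (⇑(b j) ⬝ᵥ u) := by
        intro u cf
        simp only [dotProduct, Finset.sum_apply, Pi.smul_apply, smul_eq_mul,
          Finset.sum_mul, mul_assoc]
        rw [Finset.sum_comm]
        simp_rw [← Finset.mul_sum]
      have hexp : w ⬝ᵥ ⇑(b i) = ∑ j ∈ F, (⇑(b j) ⬝ᵥ x) * (⇑(b j) ⬝ᵥ ⇑(b i)) := by
        rw [hw]; exact hexp' _ _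
      have hwb : w ⬝ᵥ ⇑(b i) = ⇑(b i) ⬝ᵥ x := by
        rw [hexp, Finset.sum_eq_single_of_mem i hiF]
        · rw [hob i i, if_pos rfl, mul_one]
        · intro j _ hji
          rw [hob j i, if_neg hji, mul_zero]
      have hwne : w ≠ 0 := by
        intro h
        rw [h, zero_dotProduct] at hwb
        exact hci hwb.symm
      have hsw : ∑ t, w t = 0 := by
        have h1 : ∑ t, w t = ∑ j ∈ F, (⇑(b j) ⬝ᵥ x) * ∑ t, ⇑(b j) t := by
          rw [hw]
          simp only [Finset.sum_apply, Pi.smul_apply, smul_eq_mul]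
          rw [Finset.sum_comm]
          simp_rw [← Finset.mul_sum]
        have h2 : ∑ j ∈ F, (⇑(b j) ⬝ᵥ x) * ∑ t, ⇑(b j) t
            = ∑ j, (⇑(b j) ⬝ᵥ x) * ∑ t, ⇑(b j) t := by
          apply Finset.sum_subset (Finset.subset_univ F)
          intro j _ hj
          have hje : ev j ≠ (d : ℝ) := by simpa [hF] using hj
          rw [hbsum j hje, mul_zero]
        have h3 : ∑ j, (⇑(b j) ⬝ᵥ x) * ∑ t, ⇑(b j) t = ∑ t, x t := by
          have h := OrthonormalBasis.sum_inner_mul_inner b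
            ((WithLp.equiv 2 (V → ℝ)).symm x)
            ((WithLp.equiv 2 (V → ℝ)).symm (fun _ => (1 : ℝ)))
          simp only [hbi2, hib, hinner] at h
          simpa [dotProduct] using h
        rw [h1, h2, h3, hx]
      have hdlam := hlam (d : ℝ) w hwne hsw hAw
      rw [hdi]; exact hdlam
    · exact hlam' i hdi
  -- final estimate
  rw [hmain]
  have hstep : |∑ i, (⇑(b i) ⬝ᵥ x) * (ev i * (⇑(b i) ⬝ᵥ y))|
      ≤ lam * ∑ i, |⇑(b i) ⬝ᵥ x| * |⇑(b i) ⬝ᵥ y| := by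
    calc |∑ i, (⇑(b i) ⬝ᵥ x) * (ev i * (⇑(b i) ⬝ᵥ y))|
        ≤ ∑ i, |(⇑(b i) ⬝ᵥ x) * (ev i * (⇑(b i) ⬝ᵥ y))| :=
          Finset.abs_sum_le_sum_abs _ _
      _ ≤ ∑ i, lam * (|⇑(b i) ⬝ᵥ x| * |⇑(b i) ⬝ᵥ y|) := by
          refine Finset.sum_le_sum fun i _ => ?_
          rw [abs_mul, abs_mul]
          rcases eq_or_ne (⇑(b i) ⬝ᵥ x) 0 with h | h
          · simp [h]
          · have hev := hbound i h
            calc |⇑(b i) ⬝ᵥ x| * (|ev i| * |⇑(b i) ⬝ᵥ y|)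
                = |ev i| * (|⇑(b i) ⬝ᵥ x| * |⇑(b i) ⬝ᵥ y|) := by ring
              _ ≤ lam * (|⇑(b i) ⬝ᵥ x| * |⇑(b i) ⬝ᵥ y|) :=
                  mul_le_mul_of_nonneg_right hev (by positivity)
      _ = lam * ∑ i, |⇑(b i) ⬝ᵥ x| * |⇑(b i) ⬝ᵥ y| := (Finset.mul_sum _ _ _).symm
  refine hstep.trans ?_
  apply mul_le_mul_of_nonneg_left ?_ hlam0
  have hcs := Finset.sum_mul_sq_le_sq_mul_sq Finset.univ
    (fun i => |⇑(b i) ⬝ᵥ x|) (fun i => |⇑(b i) ⬝ᵥ y|)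
  simp_rw [sq_abs] at hcs
  rw [hparx x, hparx y] at hcs
  have hnn : 0 ≤ ∑ i, |⇑(b i) ⬝ᵥ x| * |⇑(b i) ⬝ᵥ y| :=
    Finset.sum_nonneg fun i _ => by positivity
  calc ∑ i, |⇑(b i) ⬝ᵥ x| * |⇑(b i) ⬝ᵥ y|
      = Real.sqrt ((∑ i, |⇑(b i) ⬝ᵥ x| * |⇑(b i) ⬝ᵥ y|) ^ 2) := (Real.sqrt_sq hnn).symm
    _ ≤ Real.sqrt ((∑ t, x t ^ 2) * ∑ t, y t ^ 2) := Real.sqrt_le_sqrt hcs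
    _ = Real.sqrt (∑ t, x t ^ 2) * Real.sqrt (∑ t, y t ^ 2) :=
        Real.sqrt_mul (by positivity) _

open SimpleGraph in
/-- Expander mixing lemma: Let G be a d-regular graph on n vertices and let
lam bound |μ| for every nontrivial adjacency eigenvalue μ (those possessing an eigenvector
orthogonal to the constants). Then for all vertex subsets U, W:
|e(U,W) − (d/n)|U||W|| ≤ lam·√(|U||W|), where e(U,W) counts pairs (u,w) ∈ U×W with u ~ w. -/
theorem stmt_16 {V : Type*} [Fintype V] [DecidableEq V] (G : SimpleGraph V)
    [DecidableRel G.Adj] (d : ℕ) (hd : G.IsRegularOfDegree d) (lam : ℝ) (hlam0 : 0 ≤ lam)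
    (hlam : ∀ (μ : ℝ) (v : V → ℝ), v ≠ 0 → (∑ x, v x) = 0 →
      (adjMatrix ℝ G).mulVec v = μ • v → |μ| ≤ lam)
    (U W : Finset V) :
    |(∑ u ∈ U, ∑ w ∈ W, if G.Adj u w then (1 : ℝ) else 0)
        - (d : ℝ) / (Fintype.card V) * U.card * W.card|
      ≤ lam * Real.sqrt ((U.card : ℝ) * W.card) := by
  classical
  rcases isEmpty_or_nonempty V with hV | hV
  · have hU : U = ∅ := Finset.eq_empty_of_isEmpty U
    have hW : W = ∅ := Finset.eq_empty_of_isEmpty W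
    simp [hU, hW]
  have hn0 : (0 : ℝ) < (Fintype.card V : ℝ) := by exact_mod_cast Fintype.card_pos
  set n : ℝ := (Fintype.card V : ℝ) with hn
  set xU : V → ℝ := fun t => if t ∈ U then 1 else 0 with hxU
  set yW : V → ℝ := fun t => if t ∈ W then 1 else 0 with hyW
  set x : V → ℝ := fun t => xU t - U.card / n with hxdef
  set y : V → ℝ := fun t => yW t - W.card / n with hydef
  have hind : ∀ S : Finset V, ∑ t, (if t ∈ S then (1 : ℝ) else 0) = S.card := by
    intro S
    simp [Finset.sum_ite_mem, Finset.univ_inter]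
  have hxsum : ∑ t, x t = 0 := by
    rw [hxdef]
    rw [Finset.sum_sub_distrib]
    rw [hxU, hind U, Finset.sum_const, Finset.card_univ, nsmul_eq_mul, ← hn,
      mul_div_cancel₀ _ (ne_of_gt hn0), sub_self]
  have hysum : ∑ t, y t = 0 := by
    rw [hydef]
    rw [Finset.sum_sub_distrib]
    rw [hyW, hind W, Finset.sum_const, Finset.card_univ, nsmul_eq_mul, ← hn,
      mul_div_cancel₀ _ (ne_of_gt hn0), sub_self]
  -- dot product facts
  have f1 : (G.adjMatrix ℝ) *ᵥ (fun _ => (1 : ℝ)) = fun _ => (d : ℝ) := by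
    funext v
    simp [hd v]
  have f2 : ∀ v : V → ℝ, (fun _ => (1 : ℝ)) ⬝ᵥ ((G.adjMatrix ℝ) *ᵥ v) = d * ∑ t, v t := by
    intro v
    rw [Matrix.dotProduct_mulVec]
    have hvm : (fun _ => (1 : ℝ)) ᵥ* (G.adjMatrix ℝ) = fun _ => (d : ℝ) := by
      funext t; simp [hd t]
    rw [hvm]
    simp [dotProduct, Finset.mul_sum]
  have fE : xU ⬝ᵥ ((G.adjMatrix ℝ) *ᵥ yW)
      = ∑ u ∈ U, ∑ w ∈ W, if G.Adj u w then (1 : ℝ) else 0 := by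
    rw [dotProduct_mulVec_adjMatrix]
    rw [show (∑ u ∈ U, ∑ w ∈ W, if G.Adj u w then (1 : ℝ) else 0)
        = ∑ u, if u ∈ U then
            (∑ w, if w ∈ W then (if G.Adj u w then (1 : ℝ) else 0) else 0) else 0 by
      simp [Finset.sum_ite_mem, Finset.univ_inter]]
    refine Finset.sum_congr rfl fun u _ => ?_
    by_cases hu : u ∈ U
    · rw [if_pos hu]
      refine Finset.sum_congr rfl fun w _ => ?_
      by_cases hw : w ∈ W <;> by_cases ha : G.Adj u w <;> simp [hxU, hyW, hu, hw, ha]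
    · rw [if_neg hu]
      refine Finset.sum_eq_zero fun w _ => ?_
      by_cases ha : G.Adj u w <;> simp [hxU, hyW, hu, ha]
  have f3 : xU ⬝ᵥ (fun _ => (d : ℝ)) = U.card * d := by
    simp [hxU, dotProduct, ite_mul, Finset.sum_ite_mem, Finset.univ_inter]
  have hyWsum : ∑ t, yW t = W.card := by rw [hyW]; exact hind W
  have hosum : ∑ t : V, (fun _ : V => (1 : ℝ)) t = n := by
    simp [hn]
  -- the key algebraic identity
  have hkey : x ⬝ᵥ ((G.adjMatrix ℝ) *ᵥ y)
      = (∑ u ∈ U, ∑ w ∈ W, if G.Adj u w then (1 : ℝ) else 0)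
        - (d : ℝ) / n * U.card * W.card := by
    have hxe : x = xU - (U.card / n) • (fun _ => (1 : ℝ)) := by
      funext t; simp [hxdef, hxU]
    have hye : y = yW - (W.card / n) • (fun _ => (1 : ℝ)) := by
      funext t; simp [hydef, hyW]
    rw [hxe, hye]
    rw [Matrix.mulVec_sub, Matrix.mulVec_smul, sub_dotProduct,
      dotProduct_sub, dotProduct_sub, smul_dotProduct,
      smul_dotProduct, dotProduct_smul, dotProduct_smul, f1]
    rw [fE, f3, f2 yW, hyWsum]
    have ho : (fun _ : V => (1 : ℝ)) ⬝ᵥ (fun _ : V => (d : ℝ)) = n * d := by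
      simp [dotProduct, hn, Finset.mul_sum, Finset.card_univ, mul_comm]
    rw [ho]
    simp only [smul_eq_mul]
    field_simp
    ring
  have hsq : ∀ S : Finset V, ∑ t, ((if t ∈ S then (1 : ℝ) else 0) - S.card / n) ^ 2
      = S.card - (S.card : ℝ) ^ 2 / n := by
    intro S
    have h1 : ∀ t : V, ((if t ∈ S then (1 : ℝ) else 0) - S.card / n) ^ 2
        = (if t ∈ S then (1 : ℝ) else 0)
          - 2 * ((S.card : ℝ) / n) * (if t ∈ S then (1 : ℝ) else 0) + (S.card / n) ^ 2 := by
      intro t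
      by_cases h : t ∈ S <;> simp [h] <;> ring
    simp_rw [h1]
    rw [Finset.sum_add_distrib, Finset.sum_sub_distrib, hind S, ← Finset.mul_sum, hind S,
      Finset.sum_const, Finset.card_univ, nsmul_eq_mul, ← hn]
    field_simp
    ring
  have hx2 : ∑ t, x t ^ 2 ≤ (U.card : ℝ) := by
    rw [hxdef]
    simp only [hxU]
    rw [hsq U]
    have : 0 ≤ (U.card : ℝ) ^ 2 / n := by positivity
    linarith
  have hy2 : ∑ t, y t ^ 2 ≤ (W.card : ℝ) := by
    rw [hydef]
    simp only [hyW]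
    rw [hsq W]
    have : 0 ≤ (W.card : ℝ) ^ 2 / n := by positivity
    linarith
  rw [← hkey]
  refine (mixing_key G d hd lam hlam0 hlam x y hxsum hysum).trans ?_
  refine mul_le_mul_of_nonneg_left ?_ hlam0
  have hs1 : Real.sqrt (∑ t, x t ^ 2) ≤ Real.sqrt (U.card : ℝ) := Real.sqrt_le_sqrt hx2
  have hs2 : Real.sqrt (∑ t, y t ^ 2) ≤ Real.sqrt (W.card : ℝ) := Real.sqrt_le_sqrt hy2
  calc Real.sqrt (∑ t, x t ^ 2) * Real.sqrt (∑ t, y t ^ 2)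
      ≤ Real.sqrt (U.card : ℝ) * Real.sqrt (W.card : ℝ) :=
        mul_le_mul hs1 hs2 (Real.sqrt_nonneg _) (Real.sqrt_nonneg _)
    _ = Real.sqrt ((U.card : ℝ) * W.card) := (Real.sqrt_mul (by positivity) _).symm
end
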